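/- arXiv:2112.00732 — 5 statements merged into one kernel-verified Lean document; each statement's English description precedes it below -/
import Mathlib

section
/- Let {Z_k}_{k≥1} be an iid sequence of nonnegative real-valued random variables with E[Z_1^2] < ∞. Then there exists a constant C > 0 such that for every δ ∈ (0,1], limsup_{N→∞} (1/N) · E[ max_{1≤k≤N} Σ_{ℓ=k}^{k+⌊δN⌋} Z_ℓ ] ≤ C·δ. (In other words, as δ → 0 the limsup is O(δ).) -/
open MeasureTheory ProbabilityTheory Filter Finset

set_option maxHeartbeats 1000000 in
/-- **Regularity for independent random variables.**
Let `{Z_k}_{k ≥ 1}` be an iid sequence of nonnegative real-valued random variables with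
`E[Z_1²] < ∞`.  Then there is a constant `C > 0` such that for every `δ ∈ (0,1]`,
`limsup_{N → ∞} (1/N) · E[ max_{1 ≤ k ≤ N} Σ_{ℓ=k}^{k+⌊δN⌋} Z_ℓ ] ≤ C · δ`. -/
theorem regularity_for_iid {Ω : Type*} [MeasurableSpace Ω]
    (P : Measure Ω) [IsProbabilityMeasure P]
    (Z : ℕ → Ω → ℝ)
    (hmeas : ∀ k, Measurable (Z k))
    (hindep : iIndepFun Z P)
    (hident : ∀ k, IdentDistrib (Z k) (Z 1) P P)
    (hnonneg : ∀ k ω, 0 ≤ Z k ω)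
    (hmom : Integrable (fun ω => (Z 1 ω) ^ 2) P) :
    ∃ C > 0, ∀ δ ∈ Set.Ioc (0 : ℝ) 1,
      Filter.limsup (fun N : ℕ =>
          (N : ℝ)⁻¹ * ∫ ω, (⨆ k ∈ Finset.Icc 1 N,
            ∑ ℓ ∈ Finset.Icc k (k + ⌊δ * (N : ℝ)⌋₊), Z ℓ ω) ∂P) Filter.atTop
        ≤ C * δ := by
  classical
  have hZ2 : MemLp (Z 1) 2 P :=
    (memLp_two_iff_integrable_sq (hmeas 1).aestronglyMeasurable).mpr hmom
  have hZk2 : ∀ k, MemLp (Z k) 2 P := fun k => (hident k).symm.memLp_snd hZ2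
  have hZint : ∀ k, Integrable (Z k) P := fun k => (hZk2 k).integrable one_le_two
  set μZ : ℝ := ∫ ω, Z 1 ω ∂P with hμZdef
  have hμZ_eq : ∀ k, ∫ ω, Z k ω ∂P = μZ := fun k =>
    ((hident k).integral_eq).trans hμZdef.symm
  have hμZnn : 0 ≤ μZ := by
    rw [hμZdef]; exact integral_nonneg fun ω => hnonneg 1 ω
  set V : ℝ := variance (Z 1) P with hVdef
  have hVnn : 0 ≤ V := by rw [hVdef]; exact variance_nonneg _ _
  have hVk : ∀ k, variance (Z k) P = V := fun k =>
    ((hident k).variance_eq).trans hVdef.symm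
  refine ⟨2 * μZ + 1, by positivity, ?_⟩
  rintro δ ⟨hδ0, hδ1⟩
  set a : ℕ → ℝ := fun N =>
    (N : ℝ)⁻¹ * ∫ ω, (⨆ k ∈ Finset.Icc 1 N,
      ∑ ℓ ∈ Finset.Icc k (k + ⌊δ * (N : ℝ)⌋₊), Z ℓ ω) ∂P with hadef
  set b : ℕ → ℝ := fun N =>
    2 * δ * μZ + (2 * μZ + (1 + 5 * V) * Real.sqrt N) / N with hbdef
  have hsup_nonneg : ∀ (N : ℕ) (ω : Ω),
      0 ≤ ⨆ k ∈ Finset.Icc 1 N, ∑ ℓ ∈ Finset.Icc k (k + ⌊δ * (N : ℝ)⌋₊), Z ℓ ω :=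
    fun N ω => Real.iSup_nonneg fun k => Real.iSup_nonneg fun _ =>
      Finset.sum_nonneg fun ℓ _ => hnonneg ℓ ω
  have ha_nonneg : ∀ N, 0 ≤ a N := fun N =>
    mul_nonneg (by positivity) (integral_nonneg fun ω => hsup_nonneg N ω)
  -- the key estimate
  have key : ∀ N : ℕ, 1 ≤ N → a N ≤ b N := by
    intro N hN
    simp only [hadef, hbdef]
    have hNpos : (0:ℝ) < N := by exact_mod_cast hN
    set m : ℕ := ⌊δ * (N : ℝ)⌋₊ with hmdef
    set L : ℕ := m + 1 with hLdef
    have hLpos : 0 < L := Nat.succ_pos m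
    set J : ℕ := N / L + 2 with hJdef
    have hmN : m ≤ N := by
      have h1 : (m : ℝ) ≤ δ * N := Nat.floor_le (by positivity)
      have h2 : δ * N ≤ N := by nlinarith
      exact_mod_cast h1.trans h2
    set B : ℕ → Ω → ℝ := fun j ω => ∑ ℓ ∈ Finset.Ico (j*L) ((j+1)*L), Z ℓ ω with hBdef
    set c : ℝ := (L : ℝ) * μZ with hcdef
    have hcnn : 0 ≤ c := by rw [hcdef]; positivity
    have hcard : ∀ j : ℕ, (Finset.Ico (j*L) ((j+1)*L)).card = L := by
      intro j
      rw [Nat.card_Ico, add_mul, one_mul, Nat.add_sub_cancel_left]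
    have hBmem : ∀ j, MemLp (B j) 2 P := fun j =>
      memLp_finset_sum _ (fun i _ => hZk2 i)
    have hBint : ∀ j, ∫ ω, B j ω ∂P = c := by
      intro j
      simp only [hBdef]
      rw [integral_finset_sum _ (fun i _ => hZint i)]
      simp only [hμZ_eq, Finset.sum_const, hcard, nsmul_eq_mul, hcdef]
    have hBvar : ∀ j, variance (B j) P = (L : ℝ) * V := by
      intro j
      have hfun : B j = ∑ ℓ ∈ Finset.Ico (j*L) ((j+1)*L), Z ℓ := by
        ext ω; simp [hBdef, Finset.sum_apply]
      rw [hfun, IndepFun.variance_sum (fun i _ => hZk2 i)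
        (fun i _ j' _ hij => hindep.indepFun hij)]
      simp only [hVk, Finset.sum_const, hcard, nsmul_eq_mul]
    set Q : Ω → ℝ := fun ω => ∑ j ∈ Finset.range J, (B j ω - c)^2 with hQdef
    have hQnn : ∀ ω, 0 ≤ Q ω := fun ω => Finset.sum_nonneg fun j _ => sq_nonneg _
    have hsq_int : ∀ j : ℕ, Integrable (fun ω => (B j ω - c)^2) P := by
      intro j
      have := ((hBmem j).sub (memLp_const c)).integrable_sq
      simpa using this
    have hQint : Integrable Q P := by
      simp only [hQdef]
      exact integrable_finset_sum _ (fun j _ => hsq_int j)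
    have hQval : ∫ ω, Q ω ∂P = (J : ℝ) * ((L : ℝ) * V) := by
      simp only [hQdef]
      rw [integral_finset_sum _ (fun j _ => hsq_int j)]
      have hterm : ∀ j, ∫ ω, (B j ω - c)^2 ∂P = (L : ℝ) * V := by
        intro j
        have h1 := variance_eq_integral (hBmem j).aemeasurable
        rw [hBvar j] at h1
        rw [h1]
        congr 1
        ext ω
        simp [hBint j]
      simp only [hterm, Finset.sum_const, Finset.card_range, nsmul_eq_mul]
    have hsN : (0:ℝ) < Real.sqrt N := Real.sqrt_pos.mpr hNpos
    -- pointwise estimate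
    have hpt : ∀ ω, (⨆ k ∈ Finset.Icc 1 N, ∑ ℓ ∈ Finset.Icc k (k + m), Z ℓ ω)
        ≤ 2*c + Real.sqrt N + Q ω / Real.sqrt N := by
      intro ω
      have hQnnω := hQnn ω
      have hRHS : 0 ≤ 2*c + Real.sqrt N + Q ω / Real.sqrt N := by positivity
      refine Real.iSup_le (fun k => Real.iSup_le (fun hk => ?_) hRHS) hRHS
      obtain ⟨hk1, hkN⟩ := Finset.mem_Icc.mp hk
      set j : ℕ := k / L with hjdef
      have hjk : j * L ≤ k := Nat.div_mul_le_self k L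
      have hkj : k < j * L + L := by
        have h1 := Nat.mod_add_div k L
        have h2 := Nat.mod_lt k hLpos
        rw [hjdef, mul_comm]
        omega
      have hsub : Finset.Icc k (k + m)
          ⊆ Finset.Ico (j*L) ((j+1)*L) ∪ Finset.Ico ((j+1)*L) ((j+2)*L) := by
        intro ℓ hℓ
        obtain ⟨h1, h2⟩ := Finset.mem_Icc.mp hℓ
        rw [Finset.Ico_union_Ico_eq_Ico (mul_le_mul_left (by omega) L)
          (mul_le_mul_left (by omega) L)]
        refine Finset.mem_Ico.mpr ⟨le_trans hjk h1, ?_⟩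
        have he1 : (j+2)*L = j*L + 2*L := by ring
        omega
      have hwb : ∑ ℓ ∈ Finset.Icc k (k + m), Z ℓ ω ≤ B j ω + B (j+1) ω := by
        have h1 : ∑ ℓ ∈ Finset.Icc k (k + m), Z ℓ ω
            ≤ ∑ ℓ ∈ (Finset.Ico (j*L) ((j+1)*L) ∪ Finset.Ico ((j+1)*L) ((j+2)*L)), Z ℓ ω :=
          Finset.sum_le_sum_of_subset_of_nonneg hsub (fun ℓ _ _ => hnonneg ℓ ω)
        have h2 : ∑ ℓ ∈ (Finset.Ico (j*L) ((j+1)*L) ∪ Finset.Ico ((j+1)*L) ((j+2)*L)), Z ℓ ω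
            = B j ω + B (j+1) ω := by
          rw [Finset.sum_union (Finset.Ico_disjoint_Ico_consecutive _ _ _)]
        linarith
      have hjJ : j + 1 < J := by
        have : j ≤ N / L := Nat.div_le_div_right hkN
        omega
      have hBle : ∀ i, i < J → B i ω ≤ c + Real.sqrt (Q ω) := by
        intro i hi
        have h1 : (B i ω - c)^2 ≤ Q ω := by
          simp only [hQdef]
          exact Finset.single_le_sum (f := fun j => (B j ω - c)^2)
            (fun j _ => sq_nonneg _) (Finset.mem_range.mpr hi)
        have h2 : B i ω - c ≤ Real.sqrt (Q ω) := by
          calc B i ω - c ≤ |B i ω - c| := le_abs_self _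
            _ = Real.sqrt ((B i ω - c)^2) := (Real.sqrt_sq_eq_abs _).symm
            _ ≤ Real.sqrt (Q ω) := Real.sqrt_le_sqrt h1
        linarith
      have h3 : 2 * Real.sqrt (Q ω) ≤ Real.sqrt N + Q ω / Real.sqrt N := by
        rw [← sub_le_iff_le_add', le_div_iff₀ hsN]
        nlinarith [sq_nonneg (Real.sqrt (Q ω) - Real.sqrt N), Real.sq_sqrt hQnnω,
          Real.sqrt_nonneg (Q ω)]
      have h4 := hBle j (by omega)
      have h5 := hBle (j+1) hjJ
      linarith
    -- integrate
    have hgint : Integrable (fun ω => (2*c + Real.sqrt N) + Q ω / Real.sqrt N) P :=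
      (integrable_const _).add (hQint.div_const _)
    have hint : ∫ ω, (⨆ k ∈ Finset.Icc 1 N, ∑ ℓ ∈ Finset.Icc k (k + m), Z ℓ ω) ∂P
        ≤ 2*c + Real.sqrt N + ((J : ℝ) * ((L : ℝ) * V)) / Real.sqrt N := by
      calc ∫ ω, (⨆ k ∈ Finset.Icc 1 N, ∑ ℓ ∈ Finset.Icc k (k + m), Z ℓ ω) ∂P
          ≤ ∫ ω, ((2*c + Real.sqrt N) + Q ω / Real.sqrt N) ∂P :=
            integral_mono_of_nonneg (ae_of_all _ fun ω => hsup_nonneg N ω) hgint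
              (ae_of_all _ fun ω => by have := hpt ω; linarith)
        _ = 2*c + Real.sqrt N + ((J : ℝ) * ((L : ℝ) * V)) / Real.sqrt N := by
            rw [integral_add (integrable_const _) (hQint.div_const _),
              integral_const, integral_div, hQval]
            simp [measure_univ]
    -- arithmetic
    have hJL : (J : ℝ) * (L : ℝ) ≤ 5 * N := by
      have h1 : J * L ≤ 5 * N := by
        have h2 := Nat.div_mul_le_self N L
        have h3 : J * L = N / L * L + 2 * L := by ring
        omega
      exact_mod_cast h1
    have hmR : (m : ℝ) ≤ δ * N := Nat.floor_le (by positivity)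
    have hcR : c ≤ δ * N * μZ + μZ := by
      rw [hcdef]
      have hLc : (L : ℝ) = (m : ℝ) + 1 := by exact_mod_cast rfl
      rw [hLc]
      nlinarith
    have hQbound : ((J : ℝ) * ((L : ℝ) * V)) / Real.sqrt N ≤ 5 * V * Real.sqrt N := by
      have h1 : (J : ℝ) * ((L : ℝ) * V) ≤ 5 * N * V := by nlinarith
      have h2 : ((J : ℝ) * ((L : ℝ) * V)) / Real.sqrt N ≤ (5 * (N:ℝ) * V) / Real.sqrt N :=
        div_le_div_of_nonneg_right h1 hsN.le
      have h3 : (5 * (N:ℝ) * V) / Real.sqrt N = 5 * V * Real.sqrt N := by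
        rw [show 5 * (N:ℝ) * V = 5 * V * (N:ℝ) by ring, mul_div_assoc, Real.div_sqrt]
      linarith
    have hNs : Real.sqrt N * Real.sqrt N = N := Real.mul_self_sqrt hNpos.le
    have hfinal : (N : ℝ)⁻¹ * ∫ ω, (⨆ k ∈ Finset.Icc 1 N,
        ∑ ℓ ∈ Finset.Icc k (k + m), Z ℓ ω) ∂P
        ≤ 2 * δ * μZ + (2 * μZ + (1 + 5 * V) * Real.sqrt N) / N := by
      have h1 : (N : ℝ)⁻¹ * ∫ ω, (⨆ k ∈ Finset.Icc 1 N,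
          ∑ ℓ ∈ Finset.Icc k (k + m), Z ℓ ω) ∂P
          ≤ (N : ℝ)⁻¹ * (2*c + Real.sqrt N + ((J : ℝ) * ((L : ℝ) * V)) / Real.sqrt N) :=
        mul_le_mul_of_nonneg_left hint (by positivity)
      have h2 : (N : ℝ)⁻¹ * (2*c + Real.sqrt N + ((J : ℝ) * ((L : ℝ) * V)) / Real.sqrt N)
          ≤ (N : ℝ)⁻¹ * (2*(δ * N * μZ + μZ) + Real.sqrt N + 5 * V * Real.sqrt N) := by
        apply mul_le_mul_of_nonneg_left _ (by positivity)
        linarith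
      have h3 : (N : ℝ)⁻¹ * (2*(δ * N * μZ + μZ) + Real.sqrt N + 5 * V * Real.sqrt N)
          = 2 * δ * μZ + (2 * μZ + (1 + 5 * V) * Real.sqrt N) / N := by
        field_simp
        ring
      linarith
    exact hfinal
  -- limsup part
  have hsqrt_tendsto : Tendsto (fun N : ℕ => Real.sqrt N) atTop atTop := by
    apply tendsto_atTop_atTop_of_monotone
    · intro p q hpq
      exact Real.sqrt_le_sqrt (by exact_mod_cast hpq)
    · intro x
      refine ⟨(⌈x⌉₊)^2, ?_⟩
      rw [show (((⌈x⌉₊)^2 : ℕ) : ℝ) = ((⌈x⌉₊ : ℝ))^2 by push_cast; ring,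
        Real.sqrt_sq (by positivity)]
      exact Nat.le_ceil x
  have hb_tendsto : Tendsto b atTop (nhds (2 * δ * μZ)) := by
    have h1 : Tendsto (fun N : ℕ => (2*μZ)/(N:ℝ)) atTop (nhds 0) :=
      tendsto_const_div_atTop_nhds_zero_nat _
    have h2 : Tendsto (fun N : ℕ => (1+5*V)/Real.sqrt N) atTop (nhds 0) :=
      tendsto_const_nhds.div_atTop hsqrt_tendsto
    have h3 : Tendsto (fun N : ℕ => (2*μZ)/(N:ℝ) + (1+5*V)/Real.sqrt N) atTop (nhds 0) := by
      simpa using h1.add h2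
    have h4 : ∀ᶠ N : ℕ in atTop, (2*μZ)/(N:ℝ) + (1+5*V)/Real.sqrt N
        = (2 * μZ + (1 + 5 * V) * Real.sqrt N) / N := by
      filter_upwards [eventually_ge_atTop 1] with N hN
      have hNpos : (0:ℝ) < N := by exact_mod_cast hN
      have hsN : (0:ℝ) < Real.sqrt N := Real.sqrt_pos.mpr hNpos
      have hNs : Real.sqrt N * Real.sqrt N = N := Real.mul_self_sqrt hNpos.le
      rw [eq_div_iff hNpos.ne']
      field_simp
      linear_combination (-(1 + 5*V)) * hNs
    have h5 : Tendsto (fun N : ℕ => (2 * μZ + (1 + 5 * V) * Real.sqrt N) / N)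
        atTop (nhds 0) := h3.congr' h4
    have := tendsto_const_nhds (x := 2 * δ * μZ) (f := atTop (α := ℕ)) |>.add h5
    simpa [hbdef] using this
  calc Filter.limsup a Filter.atTop ≤ Filter.limsup b Filter.atTop := by
        exact limsup_le_limsup (eventually_atTop.mpr ⟨1, key⟩)
          (isCoboundedUnder_le_of_le atTop ha_nonneg) hb_tendsto.isBoundedUnder_le
    _ = 2 * δ * μZ := hb_tendsto.limsup_eq
    _ ≤ (2 * μZ + 1) * δ := by nlinarith
end

section
/- Let N ≥ 1 and n ≥ 1 be integers and C₁, C₁′ > 0 constants. Suppose nonnegative reals c_ℓ^i (for 0 ≤ ℓ ≤ n, 1 ≤ i ≤ N) and y_ℓ ≥ 0 (for 0 ≤ ℓ < n) satisfy c_{ℓ+1}^i ≤ c_ℓ^i + (C₁/N)·y_ℓ + (C₁′/N²)·Σ_{j≤N} c_ℓ^j for all 0 ≤ ℓ < n and all i ≤ N. Then there exists a constant C₂ > 0, depending only on C₁, C₁′ and on any upper bound T for n/N, such that c_ℓ^i ≤ C₂·( c_0^i + (1/N)Σ_{j≤N} c_0^j + (1/N)Σ_{0≤ℓ′<n} y_{ℓ′}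 ) for all 0 ≤ ℓ ≤ n and all i ≤ N. -/
open Finset

namespace PerceptronSGD

/-- **Discrete Grönwall-type estimate.**
Suppose nonnegative reals `c_ℓ^i` (for `0 ≤ ℓ ≤ n`, `1 ≤ i ≤ N`) and `y_ℓ ≥ 0` satisfy
`c_{ℓ+1}^i ≤ c_ℓ^i + (C₁/N)·y_ℓ + (C₁'/N²)·Σ_j c_ℓ^j` for all `0 ≤ ℓ < n` and `i ≤ N`.
Then there is a constant `C₂ > 0`, depending only on `C₁, C₁'` and an upper bound `T` for
`n/N`, such that `c_ℓ^i ≤ C₂·( c_0^i + (1/N)Σ_j c_0^j + (1/N)Σ_{ℓ' < n} y_{ℓ'} )`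
for all `0 ≤ ℓ ≤ n` and `i ≤ N`. -/
theorem discrete_gronwall (C₁ C₁' T : ℝ) (hC₁ : 0 < C₁) (hC₁' : 0 < C₁') (hT : 0 < T) :
    ∃ C₂ > (0 : ℝ),
      ∀ (N n : ℕ), 1 ≤ N → 1 ≤ n → (n : ℝ) / N ≤ T →
      ∀ (c : ℕ → Fin N → ℝ) (y : ℕ → ℝ),
        (∀ ℓ ≤ n, ∀ i, 0 ≤ c ℓ i) →
        (∀ ℓ < n, 0 ≤ y ℓ) →
        (∀ ℓ < n, ∀ i, c (ℓ + 1) i ≤ c ℓ i + C₁ / N * y ℓ + C₁' / (N : ℝ) ^ 2 * ∑ j, c ℓ j) →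
        ∀ ℓ ≤ n, ∀ i, c ℓ i ≤
          C₂ * (c 0 i + (N : ℝ)⁻¹ * ∑ j, c 0 j + (N : ℝ)⁻¹ * ∑ ℓ' ∈ Finset.range n, y ℓ') := by
  set E := Real.exp (C₁' * T) with hEdef
  have hE1 : 1 ≤ E := by
    have := Real.add_one_le_exp (C₁' * T)
    nlinarith [mul_pos hC₁' hT]
  refine ⟨(1 + C₁) * (1 + C₁' * T * E), by positivity, ?_⟩
  intro N n hN hn hnT c y hc hy hrec
  have hNpos : (0 : ℝ) < (N : ℝ) := by exact_mod_cast hN.trans_lt' Nat.zero_lt_one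
  have hNne : (N : ℝ) ≠ 0 := ne_of_gt hNpos
  set S : ℕ → ℝ := fun ℓ => (N : ℝ)⁻¹ * ∑ j, c ℓ j with hSdef
  set Y : ℝ := (N : ℝ)⁻¹ * ∑ ℓ' ∈ Finset.range n, y ℓ' with hYdef
  have hYnn : 0 ≤ Y := by
    apply mul_nonneg (by positivity)
    exact Finset.sum_nonneg fun k hk => hy k (Finset.mem_range.mp hk)
  have hSnn : ∀ ℓ ≤ n, 0 ≤ S ℓ := fun ℓ hℓ =>
    mul_nonneg (by positivity) (Finset.sum_nonneg fun j _ => hc ℓ hℓ j)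
  set a : ℝ := C₁' / N with hadef
  have ha : 0 < a := by positivity
  -- recursion for S
  have hSrec : ∀ ℓ < n, S (ℓ + 1) ≤ (1 + a) * S ℓ + C₁ / N * y ℓ := by
    intro ℓ hℓ
    have hsum : ∑ j, c (ℓ + 1) j ≤
        ∑ j, (c ℓ j + C₁ / N * y ℓ + C₁' / (N : ℝ) ^ 2 * ∑ j', c ℓ j') :=
      Finset.sum_le_sum fun j _ => hrec ℓ hℓ j
    have hcard : (Finset.univ : Finset (Fin N)).card = N := by simp
    rw [Finset.sum_add_distrib, Finset.sum_add_distrib, Finset.sum_const, Finset.sum_const,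
      hcard] at hsum
    have : S (ℓ + 1) ≤ (N : ℝ)⁻¹ *
        (∑ j, c ℓ j + N • (C₁ / N * y ℓ) + N • (C₁' / (N : ℝ) ^ 2 * ∑ j', c ℓ j')) := by
      exact mul_le_mul_of_nonneg_left hsum (by positivity)
    refine this.trans (le_of_eq ?_)
    simp only [nsmul_eq_mul, hSdef, hadef]
    field_simp
    ring
  -- power bound
  have hpowE : ∀ ℓ ≤ n, (1 + a) ^ ℓ ≤ E := by
    intro ℓ hℓ
    have h1 : (1 + a) ^ ℓ ≤ Real.exp a ^ ℓ := by
      apply pow_le_pow_left₀ (by positivity)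
      linarith [Real.add_one_le_exp a]
    refine h1.trans ?_
    rw [← Real.exp_nat_mul, hEdef, Real.exp_le_exp]
    have h2 : (ℓ : ℝ) * a ≤ (n : ℝ) * a := by
      apply mul_le_mul_of_nonneg_right _ ha.le
      exact_mod_cast hℓ
    refine h2.trans ?_
    rw [hadef]
    rw [div_le_iff₀ hNpos] at hnT
    calc (n : ℝ) * (C₁' / N) = C₁' * ((n : ℝ) / N) := by ring
    _ ≤ C₁' * T := by
        apply mul_le_mul_of_nonneg_left _ hC₁'.le
        rw [div_le_iff₀ hNpos]; exact hnT
  -- Gronwall for S with partial sums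
  have hpow : ∀ ℓ ≤ n, S ℓ ≤ (1 + a) ^ ℓ * (S 0 + C₁ / N * ∑ k ∈ Finset.range ℓ, y k) := by
    intro ℓ hℓ
    induction ℓ with
    | zero => simp
    | succ m ih =>
      have hm : m ≤ n := Nat.le_of_succ_le hℓ
      have hmlt : m < n := hℓ
      have ihm := ih hm
      have step := hSrec m hmlt
      have hpos : (1 : ℝ) ≤ (1 + a) ^ (m + 1) := one_le_pow₀ (by linarith)
      have hynn := hy m hmlt
      calc S (m + 1) ≤ (1 + a) * S m + C₁ / N * y m := step
        _ ≤ (1 + a) * ((1 + a) ^ m * (S 0 + C₁ / N * ∑ k ∈ Finset.range m, y k))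
            + C₁ / N * y m := by
            have := mul_le_mul_of_nonneg_left ihm (by linarith : (0:ℝ) ≤ 1 + a)
            linarith
        _ ≤ (1 + a) ^ (m + 1) * (S 0 + C₁ / N * ∑ k ∈ Finset.range (m + 1), y k) := by
            rw [Finset.sum_range_succ, pow_succ]
            have h3 : C₁ / N * y m ≤ (1 + a) ^ (m + 1) * (C₁ / N * y m) := by
              nlinarith [mul_nonneg (div_nonneg hC₁.le hNpos.le) hynn]
            rw [pow_succ] at h3
            nlinarith
  have hM : ∀ ℓ ≤ n, S ℓ ≤ E * (S 0 + C₁ * Y) := by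
    intro ℓ hℓ
    refine (hpow ℓ hℓ).trans ?_
    have h1 : C₁ / N * ∑ k ∈ Finset.range ℓ, y k ≤ C₁ * Y := by
      have hmono : ∑ k ∈ Finset.range ℓ, y k ≤ ∑ k ∈ Finset.range n, y k := by
        apply Finset.sum_le_sum_of_subset_of_nonneg
        · exact Finset.range_subset_range.mpr hℓ
        · intro k hk _; exact hy k (Finset.mem_range.mp hk)
      calc C₁ / N * ∑ k ∈ Finset.range ℓ, y k
          ≤ C₁ / N * ∑ k ∈ Finset.range n, y k :=
            mul_le_mul_of_nonneg_left hmono (by positivity)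
        _ = C₁ * Y := by rw [hYdef]; ring
    have hnnfac : 0 ≤ S 0 + C₁ / N * ∑ k ∈ Finset.range ℓ, y k := by
      have := hSnn 0 (Nat.zero_le n)
      have hsn : 0 ≤ ∑ k ∈ Finset.range ℓ, y k :=
        Finset.sum_nonneg fun k hk => hy k ((Finset.mem_range.mp hk).trans_le hℓ)
      positivity
    calc (1 + a) ^ ℓ * (S 0 + C₁ / N * ∑ k ∈ Finset.range ℓ, y k)
        ≤ E * (S 0 + C₁ / N * ∑ k ∈ Finset.range ℓ, y k) :=
          mul_le_mul_of_nonneg_right (hpowE ℓ hℓ) hnnfac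
      _ ≤ E * (S 0 + C₁ * Y) := by
          apply mul_le_mul_of_nonneg_left _ (by linarith : (0:ℝ) ≤ E)
          linarith
  -- bound for c
  have hcb : ∀ ℓ ≤ n, ∀ i, c ℓ i ≤
      c 0 i + C₁ / N * ∑ k ∈ Finset.range ℓ, y k + C₁' / N * ∑ k ∈ Finset.range ℓ, S k := by
    intro ℓ hℓ i
    induction ℓ with
    | zero => simp
    | succ m ih =>
      have hm : m ≤ n := Nat.le_of_succ_le hℓ
      have hmlt : m < n := hℓ
      have ihm := ih hm
      have step := hrec m hmlt i
      have hkey : C₁' / (N : ℝ) ^ 2 * ∑ j, c m j = C₁' / N * S m := by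
        simp only [hSdef]; ring
      rw [Finset.sum_range_succ, Finset.sum_range_succ]
      rw [hkey] at step
      linarith
  -- final
  intro ℓ hℓ i
  have hc0 := hc 0 (Nat.zero_le n) i
  have hS0 := hSnn 0 (Nat.zero_le n)
  have hb := hcb ℓ hℓ i
  have hsy : C₁ / N * ∑ k ∈ Finset.range ℓ, y k ≤ C₁ * Y := by
    have hmono : ∑ k ∈ Finset.range ℓ, y k ≤ ∑ k ∈ Finset.range n, y k := by
      apply Finset.sum_le_sum_of_subset_of_nonneg
      · exact Finset.range_subset_range.mpr hℓ
      · intro k hk _; exact hy k (Finset.mem_range.mp hk)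
    calc C₁ / N * ∑ k ∈ Finset.range ℓ, y k
        ≤ C₁ / N * ∑ k ∈ Finset.range n, y k :=
          mul_le_mul_of_nonneg_left hmono (by positivity)
      _ = C₁ * Y := by rw [hYdef]; ring
  have hsS : C₁' / N * ∑ k ∈ Finset.range ℓ, S k ≤ C₁' * T * (E * (S 0 + C₁ * Y)) := by
    have h1 : ∑ k ∈ Finset.range ℓ, S k ≤ (ℓ : ℝ) * (E * (S 0 + C₁ * Y)) := by
      calc ∑ k ∈ Finset.range ℓ, S k ≤ ∑ _k ∈ Finset.range ℓ, E * (S 0 + C₁ * Y) :=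
            Finset.sum_le_sum fun k hk => hM k ((Finset.mem_range.mp hk).le.trans hℓ)
        _ = (ℓ : ℝ) * (E * (S 0 + C₁ * Y)) := by
            rw [Finset.sum_const, Finset.card_range, nsmul_eq_mul]
    have hMnn : 0 ≤ E * (S 0 + C₁ * Y) := by
      have hEpos : (0:ℝ) < E := lt_of_lt_of_le one_pos hE1
      have := hSnn 0 (Nat.zero_le n)
      positivity
    have hln : (ℓ : ℝ) ≤ (n : ℝ) := by exact_mod_cast hℓ
    have h2 : (ℓ : ℝ) / N ≤ T := le_trans (by gcongr) hnT
    calc C₁' / N * ∑ k ∈ Finset.range ℓ, S k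
        ≤ C₁' / N * ((ℓ : ℝ) * (E * (S 0 + C₁ * Y))) :=
          mul_le_mul_of_nonneg_left h1 (by positivity)
      _ = C₁' * ((ℓ : ℝ) / N) * (E * (S 0 + C₁ * Y)) := by ring
      _ ≤ C₁' * T * (E * (S 0 + C₁ * Y)) := by
          exact mul_le_mul_of_nonneg_right
            (mul_le_mul_of_nonneg_left h2 hC₁'.le) hMnn
  have hEpos : (0:ℝ) < E := lt_of_lt_of_le one_pos hE1
  have hK : 0 < C₁' * T * E := by positivity
  have hgoal : ((N : ℝ)⁻¹ * ∑ j, c 0 j) = S 0 := rfl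
  rw [hgoal]
  nlinarith [mul_nonneg hK.le hc0, mul_nonneg hK.le hS0, mul_nonneg hK.le hYnn,
    mul_nonneg hC₁.le hc0, mul_nonneg hC₁.le hS0, mul_nonneg hC₁.le hYnn,
    mul_nonneg (mul_nonneg hC₁.le hK.le) hc0, mul_nonneg (mul_nonneg hC₁.le hK.le) hS0,
    mul_nonneg (mul_nonneg hC₁.le hK.le) hYnn]
end PerceptronSGD
end

section
/- Fix T ≥ 1. There exists a constant C₃ > 0, depending only on α, the supremum norm of σ and T, such that almost surely, for every 0 ≤ ℓ ≤ ⌊NT⌋, ⟨(B_{ℓ,c}^N(·))², ν_ℓ^N⟩ = (1/N)Σ_{i≤N} (B_{ℓ,c}^N(θ_ℓ^i))² ≤ C₃·( Y_ℓ² + Ȳ_N² + C̄_N² ), where Ȳ_N = (1/N)Σ_{0≤ℓ′<⌊NT⌋}|Y_{ℓ′}| and C̄_N² = (1/N)Σ_{j≤N}(c_0^j)². -/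
open MeasureTheory ProbabilityTheory Filter Finset

noncomputable section

/-- Output `g(x, θ)` of the single-layer perceptron with `N` hidden neurons. -/
def net {d N : ℕ} (σ : ℝ → ℝ) (x : Fin d → ℝ) (cv : Fin N → ℝ) (wv : Fin N → Fin d → ℝ) : ℝ :=
  (N : ℝ)⁻¹ * ∑ i, cv i * σ (∑ m, x m * wv i m)

/-- The SGD recursion with learning rate `α / N`, activation `σ`, pruning sets `ξ`,
training data `(X_k, Y_k)` and iterates `(c_k^i, w_k^i)`. -/
def IsSGD {Ω : Type} {d N : ℕ} (α : ℝ) (σ : ℝ → ℝ) (ξ : Fin N → Fin d → Bool)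
    (X : ℕ → Ω → Fin d → ℝ) (Y : ℕ → Ω → ℝ)
    (c : ℕ → Fin N → Ω → ℝ) (w : ℕ → Fin N → Ω → Fin d → ℝ) : Prop :=
  ∀ k i ω,
    c (k + 1) i ω = c k i ω + (N : ℝ)⁻¹ *
        (α * (Y k ω - net σ (X k ω) (fun j => c k j ω) (fun j => w k j ω)) *
          σ (∑ m, X k ω m * w k i ω m)) ∧
    ∀ m, w (k + 1) i ω m = w k i ω m + (N : ℝ)⁻¹ *
        (α * (Y k ω - net σ (X k ω) (fun j => c k j ω) (fun j => w k j ω)) * c k i ω *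
          deriv σ (∑ m', X k ω m' * w k i ω m') * (if ξ i m then X k ω m else 0))

/-- The training data `{(X_k, Y_k)}_{k ≥ 0}` is an iid sequence. -/
def DataIID {Ω : Type} [MeasurableSpace Ω] {d : ℕ} (P : Measure Ω)
    (X : ℕ → Ω → Fin d → ℝ) (Y : ℕ → Ω → ℝ) : Prop :=
  (∀ k, Measurable fun ω => (X k ω, Y k ω)) ∧
  iIndepFun (fun k ω => (X k ω, Y k ω)) P ∧
  ∀ k, IdentDistrib (fun ω => (X k ω, Y k ω)) (fun ω => (X 0 ω, Y 0 ω)) P P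

set_option maxHeartbeats 1000000

/-- Fix `T ≥ 1`.  There exists a constant `C₃ > 0`, depending only on `α`, the supremum norm
of `σ` and `T`, such that almost surely, for every `0 ≤ ℓ ≤ ⌊NT⌋`,
`⟨(B_{ℓ,c}^N(·))², ν_ℓ^N⟩ = (1/N)Σ_i (B_{ℓ,c}^N(θ_ℓ^i))² ≤ C₃·(Y_ℓ² + Ȳ_N² + C̄_N²)`,
where `Ȳ_N = (1/N)Σ_{ℓ' < ⌊NT⌋}|Y_{ℓ'}|` and `C̄_N² = (1/N)Σ_j (c_0^j)²`. -/
theorem Bc_squared_bound (α Kσ T : ℝ) (hα : 0 < α) (hT : 1 ≤ T) :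
    ∃ C₃ > (0 : ℝ),
      ∀ (d N : ℕ), 1 ≤ d → 1 ≤ N →
      ∀ σ : ℝ → ℝ, ContDiff ℝ 2 σ → (∀ s, |σ s| ≤ Kσ) →
        (∃ K', ∀ s, |deriv σ s| ≤ K' ∧ |deriv (deriv σ) s| ≤ K') →
      ∀ (𝒞 : Finset (Fin d → Bool)) (ξ : Fin N → Fin d → Bool), (∀ i, ξ i ∈ 𝒞) →
      ∀ (Ω : Type) (_ : MeasurableSpace Ω) (P : Measure Ω), IsProbabilityMeasure P →
      ∀ (X : ℕ → Ω → Fin d → ℝ) (Y : ℕ → Ω → ℝ)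
        (c : ℕ → Fin N → Ω → ℝ) (w : ℕ → Fin N → Ω → Fin d → ℝ),
        DataIID P X Y →
        Measurable (fun ω => fun i : Fin N => (c 0 i ω, w 0 i ω)) →
        IndepFun (fun ω => fun i : Fin N => (c 0 i ω, w 0 i ω))
          (fun ω => fun k : ℕ => (X k ω, Y k ω)) P →
        IsSGD α σ ξ X Y c w →
        ∀ᵐ ω ∂P, ∀ ℓ ≤ ⌊(N : ℝ) * T⌋₊,
          (N : ℝ)⁻¹ * ∑ i,
              (α * (Y ℓ ω - net σ (X ℓ ω) (fun j => c ℓ j ω) (fun j => w ℓ j ω)) *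
                σ (∑ m, X ℓ ω m * w ℓ i ω m)) ^ 2
            ≤ C₃ * ((Y ℓ ω) ^ 2
                + ((N : ℝ)⁻¹ * ∑ ℓ' ∈ Finset.range ⌊(N : ℝ) * T⌋₊, |Y ℓ' ω|) ^ 2
                + (N : ℝ)⁻¹ * ∑ j, (c 0 j ω) ^ 2) := by
  set E : ℝ := Real.exp (α * Kσ ^ 2 * T) with hEdef
  have hEpos : 0 < E := Real.exp_pos _
  refine ⟨3 * α ^ 2 * Kσ ^ 2 + 3 * α ^ 2 * Kσ ^ 4 * E ^ 2 + 3 * α ^ 4 * Kσ ^ 6 * E ^ 2 + 1,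
    by positivity, ?_⟩
  intro d N hd hN σ hσ hσb _ 𝒞 ξ hξ Ω _ P hP X Y c w hiid hmeas hindep hsgd
  have hK : 0 ≤ Kσ := le_trans (abs_nonneg _) (hσb 0)
  have hNpos : (0:ℝ) < N := by exact_mod_cast Nat.lt_of_lt_of_le Nat.zero_lt_one hN
  have hNne : (N:ℝ) ≠ 0 := ne_of_gt hNpos
  have hNinv : (0:ℝ) ≤ (N:ℝ)⁻¹ := by positivity
  filter_upwards with ω
  intro ℓ hℓ
  set L := ⌊(N : ℝ) * T⌋₊ with hLdef
  set A : ℕ → ℝ := fun k => (N:ℝ)⁻¹ * ∑ i, |c k i ω| with hAdef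
  have hA0 : ∀ k, 0 ≤ A k := fun k =>
    mul_nonneg hNinv (Finset.sum_nonneg fun i _ => abs_nonneg _)
  -- bound on the network output
  have hnet : ∀ k, |net σ (X k ω) (fun j => c k j ω) (fun j => w k j ω)| ≤ Kσ * A k := by
    intro k
    have h1 : |∑ i, c k i ω * σ (∑ m, X k ω m * w k i ω m)| ≤ ∑ i, |c k i ω| * Kσ := by
      refine le_trans (Finset.abs_sum_le_sum_abs _ _) (Finset.sum_le_sum fun i _ => ?_)
      rw [abs_mul]
      exact mul_le_mul_of_nonneg_left (hσb _) (abs_nonneg _)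
    calc |net σ (X k ω) (fun j => c k j ω) (fun j => w k j ω)|
        = (N:ℝ)⁻¹ * |∑ i, c k i ω * σ (∑ m, X k ω m * w k i ω m)| := by
          simp only [net, abs_mul, abs_inv, Nat.abs_cast]
      _ ≤ (N:ℝ)⁻¹ * ∑ i, |c k i ω| * Kσ := by gcongr
      _ = Kσ * A k := by rw [hAdef, ← Finset.sum_mul]; ring
  -- bound on the error term
  have hD : ∀ k, |Y k ω - net σ (X k ω) (fun j => c k j ω) (fun j => w k j ω)|
      ≤ |Y k ω| + Kσ * A k := by
    intro k
    calc |Y k ω - net σ (X k ω) (fun j => c k j ω) (fun j => w k j ω)|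
        ≤ |Y k ω| + |net σ (X k ω) (fun j => c k j ω) (fun j => w k j ω)| := abs_sub _ _
      _ ≤ |Y k ω| + Kσ * A k := by gcongr; exact hnet k
  -- one-step recursion for A
  have hstep : ∀ k, A (k+1) ≤ A k + (N:ℝ)⁻¹ * (α * Kσ * (|Y k ω| + Kσ * A k)) := by
    intro k
    have h1 : ∀ i : Fin N, |c (k+1) i ω|
        ≤ |c k i ω| + (N:ℝ)⁻¹ * (α * Kσ * (|Y k ω| + Kσ * A k)) := by
      intro i
      rw [(hsgd k i ω).1]
      refine le_trans (abs_add_le _ _) (add_le_add le_rfl ?_)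
      rw [abs_mul, abs_inv, Nat.abs_cast]
      refine mul_le_mul_of_nonneg_left ?_ hNinv
      rw [abs_mul, abs_mul, abs_of_pos hα]
      calc α * |Y k ω - net σ (X k ω) (fun j => c k j ω) (fun j => w k j ω)|
            * |σ (∑ m, X k ω m * w k i ω m)|
          ≤ α * (|Y k ω| + Kσ * A k) * Kσ := by
            refine mul_le_mul (mul_le_mul_of_nonneg_left (hD k) hα.le) (hσb _)
              (abs_nonneg _) ?_
            have := hA0 k
            positivity
        _ = α * Kσ * (|Y k ω| + Kσ * A k) := by ring
    calc A (k+1) = (N:ℝ)⁻¹ * ∑ i, |c (k+1) i ω| := rfl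
      _ ≤ (N:ℝ)⁻¹ * ∑ i : Fin N,
            (|c k i ω| + (N:ℝ)⁻¹ * (α * Kσ * (|Y k ω| + Kσ * A k))) := by
          gcongr with i _
          exact h1 i
      _ = A k + (N:ℝ)⁻¹ * (α * Kσ * (|Y k ω| + Kσ * A k)) := by
          rw [Finset.sum_add_distrib, Finset.sum_const, Finset.card_univ, Fintype.card_fin,
            nsmul_eq_mul, mul_add, hAdef]
          field_simp
    -- done
  set lr : ℝ := (N:ℝ)⁻¹ * (α * Kσ ^ 2) with hlrdef
  have hlr : 0 ≤ lr := by positivity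
  set cst : ℝ := (N:ℝ)⁻¹ * (α * Kσ) with hcstdef
  have hcst : 0 ≤ cst := by positivity
  -- Gronwall-type growth estimate
  have hgrow : ∀ n, A n ≤ (1 + lr) ^ n * (A 0 + cst * ∑ k ∈ Finset.range n, |Y k ω|) := by
    intro n
    induction n with
    | zero => simp
    | succ n ih =>
        have hB : 0 ≤ A 0 + cst * ∑ k ∈ Finset.range n, |Y k ω| := by
          have := hA0 0
          have : (0:ℝ) ≤ ∑ k ∈ Finset.range n, |Y k ω| :=
            Finset.sum_nonneg fun k _ => abs_nonneg _
          positivity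
        have hpow1 : (1:ℝ) ≤ (1 + lr) ^ (n+1) := one_le_pow₀ (by linarith)
        calc A (n+1) ≤ A n + (N:ℝ)⁻¹ * (α * Kσ * (|Y n ω| + Kσ * A n)) := hstep n
          _ = (1 + lr) * A n + cst * |Y n ω| := by rw [hlrdef, hcstdef]; ring
          _ ≤ (1 + lr) * ((1 + lr) ^ n * (A 0 + cst * ∑ k ∈ Finset.range n, |Y k ω|))
              + (1 + lr) ^ (n+1) * (cst * |Y n ω|) := by
              have h2 : cst * |Y n ω| ≤ (1 + lr) ^ (n+1) * (cst * |Y n ω|) := by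
                nlinarith [mul_nonneg hcst (abs_nonneg (Y n ω))]
              have h3 : (1 + lr) * A n ≤ (1 + lr) * ((1 + lr) ^ n *
                  (A 0 + cst * ∑ k ∈ Finset.range n, |Y k ω|)) :=
                mul_le_mul_of_nonneg_left ih (by linarith)
              linarith
          _ = (1 + lr) ^ (n+1) * (A 0 + cst * ∑ k ∈ Finset.range (n+1), |Y k ω|) := by
              rw [Finset.sum_range_succ, pow_succ]; ring
  -- the exponential bound on A ℓ
  set S : ℝ := (N:ℝ)⁻¹ * ∑ ℓ' ∈ Finset.range L, |Y ℓ' ω| with hSdef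
  have hS : 0 ≤ S := mul_nonneg hNinv (Finset.sum_nonneg fun k _ => abs_nonneg _)
  have hpowE : (1 + lr) ^ ℓ ≤ E := by
    have h1 : (1 + lr) ^ ℓ ≤ Real.exp lr ^ ℓ := by
      apply pow_le_pow_left₀ (by linarith)
      linarith [Real.add_one_le_exp lr]
    have h2 : Real.exp lr ^ ℓ = Real.exp (lr * ℓ) := by
      rw [← Real.exp_nat_mul]; ring_nf
    have hL1 : (ℓ:ℝ) ≤ (N:ℝ) * T := by
      calc (ℓ:ℝ) ≤ (L:ℝ) := by exact_mod_cast hℓ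
        _ ≤ (N:ℝ) * T := Nat.floor_le (by positivity)
    have h3 : lr * ℓ ≤ α * Kσ ^ 2 * T := by
      have hNl : (N:ℝ)⁻¹ * ℓ ≤ T := by
        rw [inv_mul_le_iff₀ hNpos]; exact hL1
      calc lr * ℓ = α * Kσ ^ 2 * ((N:ℝ)⁻¹ * ℓ) := by rw [hlrdef]; ring
        _ ≤ α * Kσ ^ 2 * T := mul_le_mul_of_nonneg_left hNl (by positivity)
    calc (1 + lr) ^ ℓ ≤ Real.exp (lr * ℓ) := by rw [← h2]; exact h1
      _ ≤ E := Real.exp_le_exp.mpr h3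
  have hAbound : A ℓ ≤ E * (A 0 + α * Kσ * S) := by
    have h1 := hgrow ℓ
    have hsum : ∑ k ∈ Finset.range ℓ, |Y k ω| ≤ ∑ k ∈ Finset.range L, |Y k ω| :=
      Finset.sum_le_sum_of_subset_of_nonneg (Finset.range_subset_range.mpr hℓ)
        (fun k _ _ => abs_nonneg _)
    have h2 : A 0 + cst * ∑ k ∈ Finset.range ℓ, |Y k ω| ≤ A 0 + α * Kσ * S := by
      rw [hcstdef, hSdef]
      have : (N:ℝ)⁻¹ * (α * Kσ) * ∑ k ∈ Finset.range ℓ, |Y k ω|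
          ≤ (N:ℝ)⁻¹ * (α * Kσ) * ∑ k ∈ Finset.range L, |Y k ω| := by
        apply mul_le_mul_of_nonneg_left hsum hcst
      linarith [this]
    have hB0 : 0 ≤ A 0 + cst * ∑ k ∈ Finset.range ℓ, |Y k ω| := by
      have h5 := hA0 0
      have h6 : (0:ℝ) ≤ ∑ k ∈ Finset.range ℓ, |Y k ω| :=
        Finset.sum_nonneg fun k _ => abs_nonneg _
      positivity
    calc A ℓ ≤ (1 + lr) ^ ℓ * (A 0 + cst * ∑ k ∈ Finset.range ℓ, |Y k ω|) := h1
      _ ≤ E * (A 0 + α * Kσ * S) := mul_le_mul hpowE h2 hB0 hEpos.le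
  -- Cauchy–Schwarz : A 0 ^ 2 ≤ C̄²
  set Cb : ℝ := (N:ℝ)⁻¹ * ∑ j, (c 0 j ω) ^ 2 with hCbdef
  have hCb : 0 ≤ Cb := mul_nonneg hNinv (Finset.sum_nonneg fun j _ => sq_nonneg _)
  have hA0sq : A 0 ^ 2 ≤ Cb := by
    have h1 : (∑ i : Fin N, |c 0 i ω|) ^ 2 ≤ (N:ℝ) * ∑ i, |c 0 i ω| ^ 2 := by
      have := sq_sum_le_card_mul_sum_sq (s := Finset.univ)
        (f := fun i : Fin N => |c 0 i ω|)
      simpa using this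
    have h2 : ∑ i : Fin N, |c 0 i ω| ^ 2 = ∑ i, (c 0 i ω) ^ 2 := by
      refine Finset.sum_congr rfl fun i _ => sq_abs _
    rw [hAdef, hCbdef, mul_pow]
    calc ((N:ℝ)⁻¹) ^ 2 * (∑ i : Fin N, |c 0 i ω|) ^ 2
        ≤ ((N:ℝ)⁻¹) ^ 2 * ((N:ℝ) * ∑ i, (c 0 i ω) ^ 2) := by rw [← h2]; gcongr
      _ = (N:ℝ)⁻¹ * ∑ j, (c 0 j ω) ^ 2 := by field_simp
  -- pointwise bound of each summand
  have hterm : ∀ i : Fin N,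
      (α * (Y ℓ ω - net σ (X ℓ ω) (fun j => c ℓ j ω) (fun j => w ℓ j ω)) *
        σ (∑ m, X ℓ ω m * w ℓ i ω m)) ^ 2
      ≤ α ^ 2 * Kσ ^ 2 * (|Y ℓ ω| + Kσ * A ℓ) ^ 2 := by
    intro i
    have habs : |α * (Y ℓ ω - net σ (X ℓ ω) (fun j => c ℓ j ω) (fun j => w ℓ j ω)) *
        σ (∑ m, X ℓ ω m * w ℓ i ω m)| ≤ α * (|Y ℓ ω| + Kσ * A ℓ) * Kσ := by
      rw [abs_mul, abs_mul, abs_of_pos hα]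
      refine mul_le_mul (mul_le_mul_of_nonneg_left (hD ℓ) hα.le) (hσb _) (abs_nonneg _) ?_
      have := hA0 ℓ
      positivity
    calc (α * (Y ℓ ω - net σ (X ℓ ω) (fun j => c ℓ j ω) (fun j => w ℓ j ω)) *
          σ (∑ m, X ℓ ω m * w ℓ i ω m)) ^ 2
        = |α * (Y ℓ ω - net σ (X ℓ ω) (fun j => c ℓ j ω) (fun j => w ℓ j ω)) *
            σ (∑ m, X ℓ ω m * w ℓ i ω m)| ^ 2 := (sq_abs _).symm
      _ ≤ (α * (|Y ℓ ω| + Kσ * A ℓ) * Kσ) ^ 2 := by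
          apply pow_le_pow_left₀ (abs_nonneg _) habs
      _ = α ^ 2 * Kσ ^ 2 * (|Y ℓ ω| + Kσ * A ℓ) ^ 2 := by ring
  have hmain : (N : ℝ)⁻¹ * ∑ i,
      (α * (Y ℓ ω - net σ (X ℓ ω) (fun j => c ℓ j ω) (fun j => w ℓ j ω)) *
        σ (∑ m, X ℓ ω m * w ℓ i ω m)) ^ 2
      ≤ α ^ 2 * Kσ ^ 2 * (|Y ℓ ω| + Kσ * A ℓ) ^ 2 := by
    calc (N : ℝ)⁻¹ * ∑ i,
        (α * (Y ℓ ω - net σ (X ℓ ω) (fun j => c ℓ j ω) (fun j => w ℓ j ω)) *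
          σ (∑ m, X ℓ ω m * w ℓ i ω m)) ^ 2
        ≤ (N:ℝ)⁻¹ * ∑ _i : Fin N, α ^ 2 * Kσ ^ 2 * (|Y ℓ ω| + Kσ * A ℓ) ^ 2 := by
          gcongr with i _
          exact hterm i
      _ = α ^ 2 * Kσ ^ 2 * (|Y ℓ ω| + Kσ * A ℓ) ^ 2 := by
          rw [Finset.sum_const, Finset.card_univ, Fintype.card_fin, nsmul_eq_mul]
          field_simp
  -- assemble everything
  have hKA : Kσ * A ℓ ≤ Kσ * E * A 0 + α * Kσ ^ 2 * E * S := by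
    have := mul_le_mul_of_nonneg_left hAbound hK
    nlinarith
  have hsum3 : (|Y ℓ ω| + Kσ * A ℓ) ^ 2
      ≤ 3 * ((Y ℓ ω) ^ 2 + Kσ ^ 2 * E ^ 2 * A 0 ^ 2 + α ^ 2 * Kσ ^ 4 * E ^ 2 * S ^ 2) := by
    have h0 : |Y ℓ ω| + Kσ * A ℓ ≤ |Y ℓ ω| + (Kσ * E * A 0 + α * Kσ ^ 2 * E * S) := by
      linarith
    have hnn : 0 ≤ |Y ℓ ω| + Kσ * A ℓ := by
      have := hA0 ℓ
      positivity
    have h1 : (|Y ℓ ω| + Kσ * A ℓ) ^ 2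
        ≤ (|Y ℓ ω| + (Kσ * E * A 0 + α * Kσ ^ 2 * E * S)) ^ 2 :=
      pow_le_pow_left₀ hnn h0 2
    have h2 : (|Y ℓ ω| + (Kσ * E * A 0 + α * Kσ ^ 2 * E * S)) ^ 2
        ≤ 3 * (|Y ℓ ω| ^ 2 + (Kσ * E * A 0) ^ 2 + (α * Kσ ^ 2 * E * S) ^ 2) := by
      nlinarith [sq_nonneg (|Y ℓ ω| - Kσ * E * A 0), sq_nonneg (|Y ℓ ω| - α * Kσ ^ 2 * E * S),
        sq_nonneg (Kσ * E * A 0 - α * Kσ ^ 2 * E * S)]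
    calc (|Y ℓ ω| + Kσ * A ℓ) ^ 2
        ≤ 3 * (|Y ℓ ω| ^ 2 + (Kσ * E * A 0) ^ 2 + (α * Kσ ^ 2 * E * S) ^ 2) :=
          le_trans h1 h2
      _ = 3 * ((Y ℓ ω) ^ 2 + Kσ ^ 2 * E ^ 2 * A 0 ^ 2 + α ^ 2 * Kσ ^ 4 * E ^ 2 * S ^ 2) := by
          rw [sq_abs]; ring
  have hfinal : α ^ 2 * Kσ ^ 2 * (|Y ℓ ω| + Kσ * A ℓ) ^ 2
      ≤ (3 * α ^ 2 * Kσ ^ 2 + 3 * α ^ 2 * Kσ ^ 4 * E ^ 2 + 3 * α ^ 4 * Kσ ^ 6 * E ^ 2 + 1)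
        * ((Y ℓ ω) ^ 2 + S ^ 2 + Cb) := by
    have h1 : α ^ 2 * Kσ ^ 2 * (|Y ℓ ω| + Kσ * A ℓ) ^ 2
        ≤ α ^ 2 * Kσ ^ 2 * (3 * ((Y ℓ ω) ^ 2 + Kσ ^ 2 * E ^ 2 * A 0 ^ 2
            + α ^ 2 * Kσ ^ 4 * E ^ 2 * S ^ 2)) :=
      mul_le_mul_of_nonneg_left hsum3 (by positivity)
    have h2 : 3 * α ^ 2 * Kσ ^ 4 * E ^ 2 * A 0 ^ 2 ≤ 3 * α ^ 2 * Kσ ^ 4 * E ^ 2 * Cb :=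
      mul_le_mul_of_nonneg_left hA0sq (by positivity)
    have n1 : 0 ≤ α ^ 2 * Kσ ^ 4 * E ^ 2 * (Y ℓ ω) ^ 2 := by positivity
    have n2 : 0 ≤ α ^ 4 * Kσ ^ 6 * E ^ 2 * (Y ℓ ω) ^ 2 := by positivity
    have n3 : 0 ≤ (Y ℓ ω) ^ 2 := sq_nonneg _
    have n4 : 0 ≤ α ^ 2 * Kσ ^ 2 * S ^ 2 := by positivity
    have n5 : 0 ≤ α ^ 2 * Kσ ^ 4 * E ^ 2 * S ^ 2 := by positivity
    have n6 : 0 ≤ S ^ 2 := sq_nonneg _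
    have n7 : 0 ≤ α ^ 2 * Kσ ^ 2 * Cb := by positivity
    have n8 : 0 ≤ α ^ 4 * Kσ ^ 6 * E ^ 2 * Cb := by positivity
    nlinarith [h1, h2, n1, n2, n3, n4, n5, n6, n7, n8, hCb]
  exact le_trans hmain hfinal

end
end

section
/- Fix T ≥ 1. There exists a constant C₄′ > 0, depending only on α, the supremum norms of σ and σ′, and T, such that almost surely, for every 0 ≤ ℓ ≤ ⌊NT⌋ and every i ≤ N, |B_{ℓ,w}^N(θ_ℓ^i)| ≤ C₄′·( |Y_ℓ| + (1/N)Σ_{j≤N}|c_0^j| + Ȳ_N )·|X_ℓ|·|c_ℓ^i|, where Ȳ_N = (1/N)Σ_{0≤ℓ′<⌊NT⌋}|Y_{ℓ′}|. -/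
open MeasureTheory ProbabilityTheory Filter Finset

noncomputable section

/-- Bound the network output by the average size of the outer weights. -/
lemma net_abs_le {d N : ℕ} (σ : ℝ → ℝ) (Kσ : ℝ) (hσ : ∀ s, |σ s| ≤ Kσ)
    (x : Fin d → ℝ) (cv : Fin N → ℝ) (wv : Fin N → Fin d → ℝ) :
    |net σ x cv wv| ≤ Kσ * ((N : ℝ)⁻¹ * ∑ j, |cv j|) := by
  have hN : (0:ℝ) ≤ (N:ℝ)⁻¹ := by positivity
  rw [net, abs_mul, abs_inv, Nat.abs_cast]
  have h1 : |∑ i, cv i * σ (∑ m, x m * wv i m)| ≤ ∑ i, |cv i| * Kσ := by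
    refine (Finset.abs_sum_le_sum_abs _ _).trans (Finset.sum_le_sum fun i _ => ?_)
    rw [abs_mul]
    exact mul_le_mul_of_nonneg_left (hσ _) (abs_nonneg _)
  calc (N:ℝ)⁻¹ * |∑ i, cv i * σ (∑ m, x m * wv i m)|
      ≤ (N:ℝ)⁻¹ * ∑ i, |cv i| * Kσ := mul_le_mul_of_nonneg_left h1 hN
    _ = Kσ * ((N : ℝ)⁻¹ * ∑ j, |cv j|) := by rw [← Finset.sum_mul]; ring

set_option maxHeartbeats 1000000 in
/-- Fix `T ≥ 1`.  There exists a constant `C₄' > 0`, depending only on `α`, the supremum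
norms of `σ` and `σ'`, and `T`, such that almost surely, for every `0 ≤ ℓ ≤ ⌊NT⌋` and
every `i ≤ N`, `|B_{ℓ,w}^N(θ_ℓ^i)| ≤ C₄'·(|Y_ℓ| + (1/N)Σ_j |c_0^j| + Ȳ_N)·|X_ℓ|·|c_ℓ^i|`,
where `Ȳ_N = (1/N)Σ_{ℓ' < ⌊NT⌋}|Y_{ℓ'}|`. -/
theorem Bw_bound (α Kσ Kσ' T : ℝ) (hα : 0 < α) (hT : 1 ≤ T) :
    ∃ C₄' > (0 : ℝ),
      ∀ (d N : ℕ), 1 ≤ d → 1 ≤ N →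
      ∀ σ : ℝ → ℝ, ContDiff ℝ 2 σ → (∀ s, |σ s| ≤ Kσ) → (∀ s, |deriv σ s| ≤ Kσ') →
        (∃ K'', ∀ s, |deriv (deriv σ) s| ≤ K'') →
      ∀ (𝒞 : Finset (Fin d → Bool)) (ξ : Fin N → Fin d → Bool), (∀ i, ξ i ∈ 𝒞) →
      ∀ (Ω : Type) (_ : MeasurableSpace Ω) (P : Measure Ω), IsProbabilityMeasure P →
      ∀ (X : ℕ → Ω → Fin d → ℝ) (Y : ℕ → Ω → ℝ)
        (c : ℕ → Fin N → Ω → ℝ) (w : ℕ → Fin N → Ω → Fin d → ℝ),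
        DataIID P X Y →
        Measurable (fun ω => fun i : Fin N => (c 0 i ω, w 0 i ω)) →
        IndepFun (fun ω => fun i : Fin N => (c 0 i ω, w 0 i ω))
          (fun ω => fun k : ℕ => (X k ω, Y k ω)) P →
        IsSGD α σ ξ X Y c w →
        ∀ᵐ ω ∂P, ∀ ℓ ≤ ⌊(N : ℝ) * T⌋₊, ∀ i : Fin N,
          Real.sqrt (∑ m,
              (α * (Y ℓ ω - net σ (X ℓ ω) (fun j => c ℓ j ω) (fun j => w ℓ j ω)) * c ℓ i ω *
                deriv σ (∑ m', X ℓ ω m' * w ℓ i ω m') *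
                  (if ξ i m then X ℓ ω m else 0)) ^ 2)
            ≤ C₄' * (|Y ℓ ω| + (N : ℝ)⁻¹ * ∑ j, |c 0 j ω|
                  + (N : ℝ)⁻¹ * ∑ ℓ' ∈ Finset.range ⌊(N : ℝ) * T⌋₊, |Y ℓ' ω|)
                * Real.sqrt (∑ m, (X ℓ ω m) ^ 2) * |c ℓ i ω| := by
  refine ⟨α * (|Kσ'| + 1) * (1 + |Kσ| * Real.exp (α * Kσ ^ 2 * T) * (1 + α * |Kσ|)) + 1,
    by positivity, ?_⟩
  set E : ℝ := Real.exp (α * Kσ ^ 2 * T) with hE_def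
  have hEpos : 0 < E := Real.exp_pos _
  set C₄' : ℝ := α * (|Kσ'| + 1) * (1 + |Kσ| * E * (1 + α * |Kσ|)) + 1 with hC_def
  intro d N hd hN σ hσC2 hσb hσ'b _ 𝒞 ξ hξ Ω mΩ P hP X Y c w hdata hmeas hindep hSGD
  have hKσ : 0 ≤ Kσ := (abs_nonneg _).trans (hσb 0)
  have hKσ' : 0 ≤ Kσ' := (abs_nonneg _).trans (hσ'b 0)
  have hNpos : (0:ℝ) < N := by exact_mod_cast hN
  have hNinv : (0:ℝ) ≤ (N:ℝ)⁻¹ := by positivity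
  refine Filter.Eventually.of_forall fun ω => ?_
  intro ℓ hℓ i
  -- abbreviations
  set L : ℕ := ⌊(N : ℝ) * T⌋₊ with hL_def
  have a_def : ∀ k : ℕ, (0:ℝ) ≤ (N:ℝ)⁻¹ * ∑ j, |c k j ω| := by
    intro k; positivity
  set q : ℝ := 1 + α * Kσ ^ 2 * (N:ℝ)⁻¹ with hq_def
  have hq1 : 1 ≤ q := by
    rw [hq_def]
    have : 0 ≤ α * Kσ ^ 2 * (N:ℝ)⁻¹ := by positivity
    linarith
  have hq0 : 0 ≤ q := by linarith
  -- one-step bound on the average of |c k|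
  have key : ∀ k : ℕ, (N:ℝ)⁻¹ * ∑ j, |c (k+1) j ω|
      ≤ q * ((N:ℝ)⁻¹ * ∑ j, |c k j ω|) + (α * Kσ * (N:ℝ)⁻¹) * |Y k ω| := by
    intro k
    have hg := net_abs_le σ Kσ hσb (X k ω) (fun j => c k j ω) (fun j => w k j ω)
    have hterm : ∀ j : Fin N, |c (k+1) j ω| ≤ |c k j ω| +
        (N:ℝ)⁻¹ * (α * (|Y k ω| + Kσ * ((N:ℝ)⁻¹ * ∑ j', |c k j' ω|)) * Kσ) := by
      intro j
      rw [(hSGD k j ω).1]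
      refine (abs_add_le _ _).trans ?_
      have h2 : |(N:ℝ)⁻¹ * (α * (Y k ω - net σ (X k ω) (fun j => c k j ω) (fun j => w k j ω)) *
          σ (∑ m, X k ω m * w k j ω m))|
          ≤ (N:ℝ)⁻¹ * (α * (|Y k ω| + Kσ * ((N:ℝ)⁻¹ * ∑ j', |c k j' ω|)) * Kσ) := by
        rw [abs_mul, abs_mul, abs_mul, abs_inv, Nat.abs_cast, abs_of_pos hα]
        have hYg : |Y k ω - net σ (X k ω) (fun j => c k j ω) (fun j => w k j ω)|
            ≤ |Y k ω| + Kσ * ((N:ℝ)⁻¹ * ∑ j', |c k j' ω|) := by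
          refine (abs_sub _ _).trans ?_
          exact add_le_add_right hg _
        refine mul_le_mul_of_nonneg_left ?_ hNinv
        refine mul_le_mul (mul_le_mul_of_nonneg_left hYg hα.le) (hσb _) (abs_nonneg _) ?_
        have := a_def k
        positivity
      linarith [h2]
    have hsum := Finset.sum_le_sum (fun j (_ : j ∈ Finset.univ) => hterm j)
    rw [Finset.sum_add_distrib, Finset.sum_const, Finset.card_univ, Fintype.card_fin] at hsum
    have h3 := mul_le_mul_of_nonneg_left hsum hNinv
    have hNe : (N:ℝ) ≠ 0 := ne_of_gt hNpos
    calc (N:ℝ)⁻¹ * ∑ j, |c (k+1) j ω|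
        ≤ (N:ℝ)⁻¹ * (∑ j, |c k j ω| + (N:ℕ) •
            ((N:ℝ)⁻¹ * (α * (|Y k ω| + Kσ * ((N:ℝ)⁻¹ * ∑ j', |c k j' ω|)) * Kσ))) := h3
      _ = q * ((N:ℝ)⁻¹ * ∑ j, |c k j ω|) + (α * Kσ * (N:ℝ)⁻¹) * |Y k ω| := by
          rw [nsmul_eq_mul, hq_def]
          field_simp
          ring
  -- discrete Gronwall
  have gron : ∀ k : ℕ, (N:ℝ)⁻¹ * ∑ j, |c k j ω| ≤
      q ^ k * ((N:ℝ)⁻¹ * ∑ j, |c 0 j ω| +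
        (α * Kσ * (N:ℝ)⁻¹) * ∑ k' ∈ Finset.range k, |Y k' ω|) := by
    intro k
    induction k with
    | zero => simp
    | succ k ih =>
      have hqk : 1 ≤ q ^ (k+1) := one_le_pow₀ hq1
      have hqk0 : 0 ≤ q ^ k := pow_nonneg hq0 k
      have hb : 0 ≤ (α * Kσ * (N:ℝ)⁻¹) * |Y k ω| := by positivity
      have hP0 : 0 ≤ (N:ℝ)⁻¹ * ∑ j, |c 0 j ω| +
          (α * Kσ * (N:ℝ)⁻¹) * ∑ k' ∈ Finset.range k, |Y k' ω| := by
        have := a_def 0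
        have hs : (0:ℝ) ≤ ∑ k' ∈ Finset.range k, |Y k' ω| :=
          Finset.sum_nonneg fun _ _ => abs_nonneg _
        have : (0:ℝ) ≤ (α * Kσ * (N:ℝ)⁻¹) * ∑ k' ∈ Finset.range k, |Y k' ω| := by positivity
        linarith [a_def 0]
      have h1 : (N:ℝ)⁻¹ * ∑ j, |c (k+1) j ω| ≤
          q * (q ^ k * ((N:ℝ)⁻¹ * ∑ j, |c 0 j ω| +
            (α * Kσ * (N:ℝ)⁻¹) * ∑ k' ∈ Finset.range k, |Y k' ω|)) +
          (α * Kσ * (N:ℝ)⁻¹) * |Y k ω| :=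
        (key k).trans (by linarith [mul_le_mul_of_nonneg_left ih hq0])
      rw [Finset.sum_range_succ, mul_add]
      have h2 : q * (q ^ k * ((N:ℝ)⁻¹ * ∑ j, |c 0 j ω| +
          (α * Kσ * (N:ℝ)⁻¹) * ∑ k' ∈ Finset.range k, |Y k' ω|)) =
          q ^ (k+1) * ((N:ℝ)⁻¹ * ∑ j, |c 0 j ω| +
          (α * Kσ * (N:ℝ)⁻¹) * ∑ k' ∈ Finset.range k, |Y k' ω|) := by
        rw [pow_succ]; ring
      have h4 : (α * Kσ * (N:ℝ)⁻¹) * |Y k ω| ≤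
          q ^ (k+1) * ((α * Kσ * (N:ℝ)⁻¹) * |Y k ω|) := le_mul_of_one_le_left hb hqk
      rw [mul_add] at *
      nlinarith [h1, h2, h4]
  -- bound the power of q by the exponential
  have hℓT : (ℓ:ℝ) ≤ (N:ℝ) * T := by
    have h1 : (ℓ:ℝ) ≤ (L:ℝ) := by exact_mod_cast hℓ
    exact h1.trans (Nat.floor_le (by positivity))
  have hqE : q ^ ℓ ≤ E := by
    have h1 : q ≤ Real.exp (α * Kσ ^ 2 * (N:ℝ)⁻¹) := by
      have := Real.add_one_le_exp (α * Kσ ^ 2 * (N:ℝ)⁻¹)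
      rw [hq_def]; linarith
    calc q ^ ℓ ≤ (Real.exp (α * Kσ ^ 2 * (N:ℝ)⁻¹)) ^ ℓ := pow_le_pow_left₀ hq0 h1 ℓ
      _ = Real.exp ((ℓ:ℝ) * (α * Kσ ^ 2 * (N:ℝ)⁻¹)) := by rw [← Real.exp_nat_mul]
      _ ≤ E := by
          rw [hE_def, Real.exp_le_exp]
          have h2 : (ℓ:ℝ) * (N:ℝ)⁻¹ ≤ T := by
            rw [← div_eq_mul_inv, div_le_iff₀ hNpos]
            linarith
          nlinarith [mul_le_mul_of_nonneg_left h2 (mul_nonneg hα.le (sq_nonneg Kσ))]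
  -- bound on a ℓ
  set A : ℝ := (N:ℝ)⁻¹ * ∑ j, |c 0 j ω| with hA_def
  set Yb : ℝ := (N:ℝ)⁻¹ * ∑ ℓ' ∈ Finset.range L, |Y ℓ' ω| with hYb_def
  have hA0 : 0 ≤ A := a_def 0
  have hYb0 : 0 ≤ Yb := by
    rw [hYb_def]
    have : (0:ℝ) ≤ ∑ ℓ' ∈ Finset.range L, |Y ℓ' ω| :=
      Finset.sum_nonneg fun _ _ => abs_nonneg _
    positivity
  have haℓ : (N:ℝ)⁻¹ * ∑ j, |c ℓ j ω| ≤ E * (1 + α * Kσ) * (A + Yb) := by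
    have hsub : ∑ k' ∈ Finset.range ℓ, |Y k' ω| ≤ ∑ ℓ' ∈ Finset.range L, |Y ℓ' ω| :=
      Finset.sum_le_sum_of_subset_of_nonneg (Finset.range_subset_range.mpr hℓ)
        (fun _ _ _ => abs_nonneg _)
    have h1 := gron ℓ
    have hP0 : 0 ≤ A + (α * Kσ * (N:ℝ)⁻¹) * ∑ k' ∈ Finset.range ℓ, |Y k' ω| := by
      have : (0:ℝ) ≤ ∑ k' ∈ Finset.range ℓ, |Y k' ω| :=
        Finset.sum_nonneg fun _ _ => abs_nonneg _
      have : (0:ℝ) ≤ (α * Kσ * (N:ℝ)⁻¹) * ∑ k' ∈ Finset.range ℓ, |Y k' ω| := by positivity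
      linarith
    have h2 : A + (α * Kσ * (N:ℝ)⁻¹) * ∑ k' ∈ Finset.range ℓ, |Y k' ω| ≤
        (1 + α * Kσ) * (A + Yb) := by
      have h3 : (α * Kσ * (N:ℝ)⁻¹) * ∑ k' ∈ Finset.range ℓ, |Y k' ω| ≤ α * Kσ * Yb := by
        rw [hYb_def]
        have := mul_le_mul_of_nonneg_left hsub (by positivity :
          (0:ℝ) ≤ α * Kσ * (N:ℝ)⁻¹)
        nlinarith [this]
      nlinarith [mul_nonneg (mul_nonneg hα.le hKσ) hA0]
    calc (N:ℝ)⁻¹ * ∑ j, |c ℓ j ω| ≤ q ^ ℓ *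
          (A + (α * Kσ * (N:ℝ)⁻¹) * ∑ k' ∈ Finset.range ℓ, |Y k' ω|) := h1
      _ ≤ E * ((1 + α * Kσ) * (A + Yb)) := by
          refine mul_le_mul hqE h2 hP0 hEpos.le
      _ = E * (1 + α * Kσ) * (A + Yb) := by ring
  -- main estimate
  set g : ℝ := net σ (X ℓ ω) (fun j => c ℓ j ω) (fun j => w ℓ j ω) with hg_def
  set D : ℝ := α * (Y ℓ ω - g) * c ℓ i ω * deriv σ (∑ m', X ℓ ω m' * w ℓ i ω m') with hD_def
  have hsum_sq : ∑ m, (D * (if ξ i m then X ℓ ω m else 0)) ^ 2 =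
      D ^ 2 * ∑ m, (if ξ i m then X ℓ ω m else 0) ^ 2 := by
    rw [Finset.mul_sum]
    exact Finset.sum_congr rfl fun m _ => by ring
  have ht : ∑ m, (if ξ i m then X ℓ ω m else 0) ^ 2 ≤ ∑ m, (X ℓ ω m) ^ 2 := by
    refine Finset.sum_le_sum fun m _ => ?_
    split_ifs
    · exact le_rfl
    · simpa using sq_nonneg (X ℓ ω m)
  have hsqrt : Real.sqrt (∑ m, (D * (if ξ i m then X ℓ ω m else 0)) ^ 2) ≤
      |D| * Real.sqrt (∑ m, (X ℓ ω m) ^ 2) := by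
    rw [hsum_sq]
    calc Real.sqrt (D ^ 2 * ∑ m, (if ξ i m then X ℓ ω m else 0) ^ 2)
        ≤ Real.sqrt (D ^ 2 * ∑ m, (X ℓ ω m) ^ 2) :=
          Real.sqrt_le_sqrt (mul_le_mul_of_nonneg_left ht (sq_nonneg D))
      _ = |D| * Real.sqrt (∑ m, (X ℓ ω m) ^ 2) := by
          rw [Real.sqrt_mul (sq_nonneg D), Real.sqrt_sq_eq_abs]
  -- bound |D|
  have hgb : |g| ≤ Kσ * ((N:ℝ)⁻¹ * ∑ j, |c ℓ j ω|) := by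
    have := net_abs_le σ Kσ hσb (X ℓ ω) (fun j => c ℓ j ω) (fun j => w ℓ j ω)
    simpa [hg_def] using this
  have hYg : |Y ℓ ω - g| ≤ |Y ℓ ω| + Kσ * ((N:ℝ)⁻¹ * ∑ j, |c ℓ j ω|) :=
    (abs_sub _ _).trans (add_le_add_right hgb _)
  have haℓ0 : (0:ℝ) ≤ (N:ℝ)⁻¹ * ∑ j, |c ℓ j ω| := a_def ℓ
  have hDb : |D| ≤ α * (|Y ℓ ω| + Kσ * ((N:ℝ)⁻¹ * ∑ j, |c ℓ j ω|)) * Kσ' * |c ℓ i ω| := by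
    rw [hD_def, abs_mul, abs_mul, abs_mul, abs_of_pos hα]
    have h5 : 0 ≤ |Y ℓ ω| + Kσ * ((N:ℝ)⁻¹ * ∑ j, |c ℓ j ω|) := by positivity
    have t1 : |Y ℓ ω - g| * |deriv σ (∑ m', X ℓ ω m' * w ℓ i ω m')| ≤
        (|Y ℓ ω| + Kσ * ((N:ℝ)⁻¹ * ∑ j, |c ℓ j ω|)) * Kσ' :=
      mul_le_mul hYg (hσ'b _) (abs_nonneg _) h5
    calc α * |Y ℓ ω - g| * |c ℓ i ω| * |deriv σ (∑ m', X ℓ ω m' * w ℓ i ω m')|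
        = (α * |c ℓ i ω|) * (|Y ℓ ω - g| * |deriv σ (∑ m', X ℓ ω m' * w ℓ i ω m')|) := by ring
      _ ≤ (α * |c ℓ i ω|) * ((|Y ℓ ω| + Kσ * ((N:ℝ)⁻¹ * ∑ j, |c ℓ j ω|)) * Kσ') :=
          mul_le_mul_of_nonneg_left t1 (by positivity)
      _ = α * (|Y ℓ ω| + Kσ * ((N:ℝ)⁻¹ * ∑ j, |c ℓ j ω|)) * Kσ' * |c ℓ i ω| := by ring
  -- bound the coefficients by C₄'
  have habsKσ : |Kσ| = Kσ := abs_of_nonneg hKσ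
  have habsKσ' : |Kσ'| = Kσ' := abs_of_nonneg hKσ'
  have hCrw : C₄' = α * (Kσ' + 1) * (1 + Kσ * E * (1 + α * Kσ)) + 1 := by
    rw [hC_def, habsKσ, habsKσ']
  have hX0 : 0 ≤ Kσ * E * (1 + α * Kσ) := by positivity
  have hC1 : α * Kσ' ≤ C₄' := by
    rw [hCrw]; nlinarith [mul_nonneg (mul_nonneg hα.le hKσ') hX0]
  have hC2 : α * Kσ' * (Kσ * E * (1 + α * Kσ)) ≤ C₄' := by
    rw [hCrw]; nlinarith [mul_nonneg hα.le hX0]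
  have hstep : α * (|Y ℓ ω| + Kσ * ((N:ℝ)⁻¹ * ∑ j, |c ℓ j ω|)) * Kσ' ≤
      C₄' * (|Y ℓ ω| + A + Yb) := by
    have h1 : Kσ * ((N:ℝ)⁻¹ * ∑ j, |c ℓ j ω|) ≤ Kσ * E * (1 + α * Kσ) * (A + Yb) := by
      have := mul_le_mul_of_nonneg_left haℓ hKσ
      nlinarith [this]
    calc α * (|Y ℓ ω| + Kσ * ((N:ℝ)⁻¹ * ∑ j, |c ℓ j ω|)) * Kσ'
        = α * Kσ' * |Y ℓ ω| + α * Kσ' * (Kσ * ((N:ℝ)⁻¹ * ∑ j, |c ℓ j ω|)) := by ring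
      _ ≤ C₄' * |Y ℓ ω| + C₄' * (A + Yb) := by
          have t1 : α * Kσ' * |Y ℓ ω| ≤ C₄' * |Y ℓ ω| :=
            mul_le_mul_of_nonneg_right hC1 (abs_nonneg _)
          have t2 : α * Kσ' * (Kσ * ((N:ℝ)⁻¹ * ∑ j, |c ℓ j ω|)) ≤
              α * Kσ' * (Kσ * E * (1 + α * Kσ) * (A + Yb)) :=
            mul_le_mul_of_nonneg_left h1 (by positivity)
          have t3 : α * Kσ' * (Kσ * E * (1 + α * Kσ) * (A + Yb)) =
              (α * Kσ' * (Kσ * E * (1 + α * Kσ))) * (A + Yb) := by ring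
          have t4 : (α * Kσ' * (Kσ * E * (1 + α * Kσ))) * (A + Yb) ≤ C₄' * (A + Yb) :=
            mul_le_mul_of_nonneg_right hC2 (by linarith)
          rw [t3] at t2
          exact add_le_add t1 (t2.trans t4)
      _ = C₄' * (|Y ℓ ω| + A + Yb) := by ring
  -- assemble
  have hsX : 0 ≤ Real.sqrt (∑ m, (X ℓ ω m) ^ 2) := Real.sqrt_nonneg _
  calc Real.sqrt (∑ m, (D * (if ξ i m then X ℓ ω m else 0)) ^ 2)
      ≤ |D| * Real.sqrt (∑ m, (X ℓ ω m) ^ 2) := hsqrt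
    _ ≤ (α * (|Y ℓ ω| + Kσ * ((N:ℝ)⁻¹ * ∑ j, |c ℓ j ω|)) * Kσ' * |c ℓ i ω|) *
        Real.sqrt (∑ m, (X ℓ ω m) ^ 2) := mul_le_mul_of_nonneg_right hDb hsX
    _ = (α * (|Y ℓ ω| + Kσ * ((N:ℝ)⁻¹ * ∑ j, |c ℓ j ω|)) * Kσ') *
        (Real.sqrt (∑ m, (X ℓ ω m) ^ 2) * |c ℓ i ω|) := by ring
    _ ≤ (C₄' * (|Y ℓ ω| + A + Yb)) *
        (Real.sqrt (∑ m, (X ℓ ω m) ^ 2) * |c ℓ i ω|) :=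
          mul_le_mul_of_nonneg_right hstep (mul_nonneg hsX (abs_nonneg (c ℓ i ω)))
    _ = C₄' * (|Y ℓ ω| + A + Yb) * Real.sqrt (∑ m, (X ℓ ω m) ^ 2) * |c ℓ i ω| := by ring

end
end

section
/- Fix T ≥ 1. There exists a constant C₅′ > 0, depending only on α, the supremum norms of σ and σ′, and T, such that almost surely, for every 0 ≤ ℓ ≤ ⌊NT⌋, ⟨|B_{ℓ,w}^N(·)|², ν_ℓ^N⟩ = (1/N)Σ_{i≤N}|B_{ℓ,w}^N(θ_ℓ^i)|² ≤ C₅′·( Y_ℓ⁶ + |X_ℓ|⁶ + C̄_N⁶ + Ȳ_N⁶ ), where Ȳ_N = (1/N)Σ_{0≤ℓ′<⌊NT⌋}|Y_{ℓ′}| and C̄_N² = (1/N)Σ_{j≤N}(c_0^j)². -/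
set_option maxHeartbeats 4000000


open MeasureTheory ProbabilityTheory Filter Finset

noncomputable section

lemma amgm3 {a b c : ℝ} (ha : 0 ≤ a) (hb : 0 ≤ b) (hc : 0 ≤ c) :
    a * b * c ≤ a ^ 3 + b ^ 3 + c ^ 3 := by
  nlinarith [sq_nonneg (a - b), sq_nonneg (b - c), sq_nonneg (a - c), sq_nonneg (a + b + c),
    mul_nonneg ha hb, mul_nonneg hb hc, mul_nonneg ha hc, mul_nonneg (mul_nonneg ha hb) hc]

/-- Fix `T ≥ 1`.  There exists a constant `C₅' > 0`, depending only on `α`, the supremum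
norms of `σ` and `σ'`, and `T`, such that almost surely, for every `0 ≤ ℓ ≤ ⌊NT⌋`,
`⟨|B_{ℓ,w}^N(·)|², ν_ℓ^N⟩ = (1/N)Σ_i |B_{ℓ,w}^N(θ_ℓ^i)|² ≤ C₅'·(Y_ℓ⁶ + |X_ℓ|⁶ + C̄_N⁶ + Ȳ_N⁶)`,
where `Ȳ_N = (1/N)Σ_{ℓ' < ⌊NT⌋}|Y_{ℓ'}|` and `C̄_N² = (1/N)Σ_j (c_0^j)²`. -/
theorem Bw_squared_bound (α Kσ Kσ' T : ℝ) (hα : 0 < α) (hT : 1 ≤ T) :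
    ∃ C₅' > (0 : ℝ),
      ∀ (d N : ℕ), 1 ≤ d → 1 ≤ N →
      ∀ σ : ℝ → ℝ, ContDiff ℝ 2 σ → (∀ s, |σ s| ≤ Kσ) → (∀ s, |deriv σ s| ≤ Kσ') →
        (∃ K'', ∀ s, |deriv (deriv σ) s| ≤ K'') →
      ∀ (𝒞 : Finset (Fin d → Bool)) (ξ : Fin N → Fin d → Bool), (∀ i, ξ i ∈ 𝒞) →
      ∀ (Ω : Type) (_ : MeasurableSpace Ω) (P : Measure Ω), IsProbabilityMeasure P →
      ∀ (X : ℕ → Ω → Fin d → ℝ) (Y : ℕ → Ω → ℝ)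
        (c : ℕ → Fin N → Ω → ℝ) (w : ℕ → Fin N → Ω → Fin d → ℝ),
        DataIID P X Y →
        Measurable (fun ω => fun i : Fin N => (c 0 i ω, w 0 i ω)) →
        IndepFun (fun ω => fun i : Fin N => (c 0 i ω, w 0 i ω))
          (fun ω => fun k : ℕ => (X k ω, Y k ω)) P →
        IsSGD α σ ξ X Y c w →
        ∀ᵐ ω ∂P, ∀ ℓ ≤ ⌊(N : ℝ) * T⌋₊,
          (N : ℝ)⁻¹ * ∑ i, ∑ m,
              (α * (Y ℓ ω - net σ (X ℓ ω) (fun j => c ℓ j ω) (fun j => w ℓ j ω)) * c ℓ i ω *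
                deriv σ (∑ m', X ℓ ω m' * w ℓ i ω m') *
                  (if ξ i m then X ℓ ω m else 0)) ^ 2
            ≤ C₅' * ((Y ℓ ω) ^ 6 + (∑ m, (X ℓ ω m) ^ 2) ^ 3
                + ((N : ℝ)⁻¹ * ∑ j, (c 0 j ω) ^ 2) ^ 3
                + ((N : ℝ)⁻¹ * ∑ ℓ' ∈ Finset.range ⌊(N : ℝ) * T⌋₊, |Y ℓ' ω|) ^ 6) := by
  refine ⟨4 * (α^2 * (max Kσ' 0)^2) * (2 + 4 * ((α * max Kσ 0) + (α * (max Kσ 0)^2) * T * Real.exp ((α * (max Kσ 0)^2) * T) * (1 + (α * max Kσ 0)))^2)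
      + 8 * (α^2 * (max Kσ' 0)^2) * (max Kσ 0)^2 * (2 + 4 * ((α * max Kσ 0) + (α * (max Kσ 0)^2) * T * Real.exp ((α * (max Kσ 0)^2) * T) * (1 + (α * max Kσ 0)))^2)^2 + 1, ?_, ?_⟩
  · positivity
  intro d N hd hN σ hσC hσb hσ'b _ 𝒞 ξ hξC Ω mΩ P hP X Y c w hiid hmeas hindep hsgd
  refine MeasureTheory.ae_of_all _ fun ω => ?_
  set K := max Kσ 0 with hK_def
  set K' := max Kσ' 0 with hK'_def
  have hK0 : 0 ≤ K := le_max_right _ _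
  have hK'0 : 0 ≤ K' := le_max_right _ _
  have hT0 : (0:ℝ) ≤ T := by linarith
  set a := α * K ^ 2 with ha_def
  set b := α * K with hb_def
  have ha0 : 0 ≤ a := by rw [ha_def]; exact mul_nonneg hα.le (sq_nonneg _)
  have hb0 : 0 ≤ b := by rw [hb_def]; exact mul_nonneg hα.le hK0
  set E := Real.exp (a * T) with hE_def
  have hE0 : 0 ≤ E := by rw [hE_def]; positivity
  set D := b + a * T * E * (1 + b) with hD_def
  have hD0 : 0 ≤ D := by
    rw [hD_def]
    have : 0 ≤ a * T * E * (1 + b) :=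
      mul_nonneg (mul_nonneg (mul_nonneg ha0 hT0) hE0) (by linarith)
    linarith
  set C₁ := 2 + 4 * D ^ 2 with hC1_def
  have hC10 : (0:ℝ) < C₁ := by rw [hC1_def]; positivity
  set C₂ := α ^ 2 * K' ^ 2 with hC2_def
  have hC20 : 0 ≤ C₂ := by rw [hC2_def]; positivity
  clear_value K K' a b E D C₁ C₂
  have hKσ : ∀ s, |σ s| ≤ K := fun s => (hσb s).trans (hK_def ▸ le_max_left _ _)
  have hKσ' : ∀ s, |deriv σ s| ≤ K' := fun s => (hσ'b s).trans (hK'_def ▸ le_max_left _ _)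
  have hN1 : (1:ℝ) ≤ (N:ℝ) := by exact_mod_cast hN
  have hNpos : (0:ℝ) < (N:ℝ) := by linarith
  have hNinv0 : (0:ℝ) ≤ (N:ℝ)⁻¹ := by positivity
  have hNN : (N:ℝ)⁻¹ * (N:ℝ) = 1 := inv_mul_cancel₀ hNpos.ne'
  set KT := ⌊(N:ℝ) * T⌋₊ with hKT_def
  clear_value KT
  set M : ℕ → ℝ := fun k => (N:ℝ)⁻¹ * ∑ i, |c k i ω| with hM_def
  set Q : ℕ → ℝ := fun k => (N:ℝ)⁻¹ * ∑ i, (c k i ω) ^ 2 with hQ_def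
  set Yb := (N:ℝ)⁻¹ * ∑ ℓ' ∈ Finset.range KT, |Y ℓ' ω| with hYb_def
  clear_value M Q Yb
  have hM0 : ∀ k, 0 ≤ M k := by
    intro k; simp only [hM_def]
    exact mul_nonneg hNinv0 (Finset.sum_nonneg fun i _ => abs_nonneg _)
  have hQ0 : ∀ k, 0 ≤ Q k := by
    intro k; simp only [hQ_def]
    exact mul_nonneg hNinv0 (Finset.sum_nonneg fun i _ => sq_nonneg _)
  have hYb0 : 0 ≤ Yb := by
    rw [hYb_def]
    exact mul_nonneg hNinv0 (Finset.sum_nonneg fun i _ => abs_nonneg _)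
  have hMQ : ∀ k, (M k) ^ 2 ≤ Q k := by
    intro k
    have h := sq_sum_le_card_mul_sum_sq (s := Finset.univ) (f := fun i => |c k i ω|)
    simp only [Finset.card_univ, Fintype.card_fin, sq_abs] at h
    have h2 : ((∑ i, |c k i ω|) : ℝ) ^ 2 ≤ (N:ℝ) * ∑ i, (c k i ω) ^ 2 := by exact_mod_cast h
    simp only [hM_def, hQ_def]
    calc ((N:ℝ)⁻¹ * ∑ i, |c k i ω|) ^ 2 = (N:ℝ)⁻¹ * ((N:ℝ)⁻¹ * (∑ i, |c k i ω|) ^ 2) := by ring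
      _ ≤ (N:ℝ)⁻¹ * ((N:ℝ)⁻¹ * ((N:ℝ) * ∑ i, (c k i ω) ^ 2)) := by
          apply mul_le_mul_of_nonneg_left (mul_le_mul_of_nonneg_left h2 hNinv0) hNinv0
      _ = ((N:ℝ)⁻¹ * (N:ℝ)) * ((N:ℝ)⁻¹ * ∑ i, (c k i ω) ^ 2) := by ring
      _ = (N:ℝ)⁻¹ * ∑ i, (c k i ω) ^ 2 := by rw [hNN, one_mul]
  have hnet : ∀ k, |net σ (X k ω) (fun j => c k j ω) (fun j => w k j ω)| ≤ K * M k := by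
    intro k
    have h1 : |∑ i, c k i ω * σ (∑ m, X k ω m * w k i ω m)| ≤ ∑ i, |c k i ω| * K := by
      refine (Finset.abs_sum_le_sum_abs _ _).trans (Finset.sum_le_sum fun i _ => ?_)
      rw [abs_mul]
      exact mul_le_mul_of_nonneg_left (hKσ _) (abs_nonneg _)
    have h2 : |net σ (X k ω) (fun j => c k j ω) (fun j => w k j ω)|
        = (N:ℝ)⁻¹ * |∑ i, c k i ω * σ (∑ m, X k ω m * w k i ω m)| := by
      simp only [net, abs_mul, abs_of_nonneg hNinv0]
    rw [h2]
    calc (N:ℝ)⁻¹ * |∑ i, c k i ω * σ (∑ m, X k ω m * w k i ω m)|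
        ≤ (N:ℝ)⁻¹ * ∑ i, |c k i ω| * K := mul_le_mul_of_nonneg_left h1 hNinv0
      _ = K * M k := by simp only [hM_def]; rw [← Finset.sum_mul]; ring
  have hcstep : ∀ k i, |c (k+1) i ω| ≤ |c k i ω| + (N:ℝ)⁻¹ * (b * |Y k ω| + a * M k) := by
    intro k i
    rw [(hsgd k i ω).1]
    have hy : |Y k ω - net σ (X k ω) (fun j => c k j ω) (fun j => w k j ω)|
        ≤ |Y k ω| + K * M k := (abs_sub _ _).trans (add_le_add le_rfl (hnet k))
    have hs := hKσ (∑ m, X k ω m * w k i ω m)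
    have h2 : |α * (Y k ω - net σ (X k ω) (fun j => c k j ω) (fun j => w k j ω)) *
        σ (∑ m, X k ω m * w k i ω m)| ≤ b * |Y k ω| + a * M k := by
      rw [abs_mul, abs_mul, abs_of_pos hα, hb_def, ha_def]
      have h3 := abs_nonneg (Y k ω - net σ (X k ω) (fun j => c k j ω) (fun j => w k j ω))
      have h4 := abs_nonneg (σ (∑ m, X k ω m * w k i ω m))
      nlinarith [hM0 k, abs_nonneg (Y k ω),
        mul_nonneg (mul_nonneg hα.le h3) (sub_nonneg.2 hs),
        mul_nonneg (mul_nonneg hα.le hK0) (sub_nonneg.2 hy)]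
    calc |c k i ω + (N:ℝ)⁻¹ * (α * (Y k ω - net σ (X k ω) (fun j => c k j ω) (fun j => w k j ω)) *
            σ (∑ m, X k ω m * w k i ω m))|
        ≤ |c k i ω| + |(N:ℝ)⁻¹ * (α * (Y k ω - net σ (X k ω) (fun j => c k j ω) (fun j => w k j ω)) *
            σ (∑ m, X k ω m * w k i ω m))| := abs_add_le _ _
      _ ≤ |c k i ω| + (N:ℝ)⁻¹ * (b * |Y k ω| + a * M k) := by
          rw [abs_mul, abs_of_nonneg hNinv0]
          exact add_le_add le_rfl (mul_le_mul_of_nonneg_left h2 hNinv0)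
  have hMstep : ∀ k, M (k+1) ≤ M k + (N:ℝ)⁻¹ * (b * |Y k ω| + a * M k) := by
    intro k
    have hsum : ∑ i, |c (k+1) i ω| ≤ ∑ i : Fin N, (|c k i ω| + (N:ℝ)⁻¹ * (b * |Y k ω| + a * M k)) :=
      Finset.sum_le_sum fun i _ => hcstep k i
    have hMk1 : M (k+1) = (N:ℝ)⁻¹ * ∑ i, |c (k+1) i ω| := by simp only [hM_def]
    have h1 : M (k+1) ≤ (N:ℝ)⁻¹ * (∑ i, |c k i ω| + (N:ℝ) * ((N:ℝ)⁻¹ * (b * |Y k ω| + a * M k))) := by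
      rw [Finset.sum_add_distrib, Finset.sum_const, Finset.card_univ, Fintype.card_fin,
        nsmul_eq_mul] at hsum
      rw [hMk1]
      exact mul_le_mul_of_nonneg_left hsum hNinv0
    have e : (N:ℝ)⁻¹ * (∑ i, |c k i ω| + (N:ℝ) * ((N:ℝ)⁻¹ * (b * |Y k ω| + a * M k)))
        = (N:ℝ)⁻¹ * ∑ i, |c k i ω| + ((N:ℝ)⁻¹ * (N:ℝ)) * ((N:ℝ)⁻¹ * (b * |Y k ω| + a * M k)) := by
      ring
    rw [e, hNN, one_mul] at h1
    have hMk : M k = (N:ℝ)⁻¹ * ∑ i, |c k i ω| := by simp only [hM_def]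
    rw [← hMk] at h1
    exact h1
  set ρ := 1 + a * (N:ℝ)⁻¹ with hρ_def
  have hρ1 : 1 ≤ ρ := by rw [hρ_def]; nlinarith [mul_nonneg ha0 hNinv0]
  clear_value ρ
  have hgron : ∀ k, M k ≤ ρ ^ k * (M 0 + (N:ℝ)⁻¹ * (b * ∑ ℓ' ∈ Finset.range k, |Y ℓ' ω|)) := by
    intro k
    induction k with
    | zero => simp
    | succ k ih =>
      have h1 := hMstep k
      have hρk : 1 ≤ ρ ^ (k+1) := one_le_pow₀ hρ1
      have h2 : ρ * M k ≤ ρ * (ρ ^ k * (M 0 + (N:ℝ)⁻¹ * (b * ∑ ℓ' ∈ Finset.range k, |Y ℓ' ω|))) :=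
        mul_le_mul_of_nonneg_left ih (by linarith)
      have h3 : (N:ℝ)⁻¹ * (b * |Y k ω|) ≤ ρ ^ (k+1) * ((N:ℝ)⁻¹ * (b * |Y k ω|)) :=
        le_mul_of_one_le_left (mul_nonneg hNinv0 (mul_nonneg hb0 (abs_nonneg _))) hρk
      have e1 : M k + (N:ℝ)⁻¹ * (b * |Y k ω| + a * M k)
          = ρ * M k + (N:ℝ)⁻¹ * (b * |Y k ω|) := by rw [hρ_def]; ring
      have e2 : ρ * (ρ ^ k * (M 0 + (N:ℝ)⁻¹ * (b * ∑ ℓ' ∈ Finset.range k, |Y ℓ' ω|)))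
            + ρ ^ (k+1) * ((N:ℝ)⁻¹ * (b * |Y k ω|))
          = ρ ^ (k+1) * (M 0 + (N:ℝ)⁻¹ * (b * ∑ ℓ' ∈ Finset.range (k+1), |Y ℓ' ω|)) := by
        rw [Finset.sum_range_succ]; ring
      linarith
  have hsumY : ∀ k, k ≤ KT → ∑ ℓ' ∈ Finset.range k, |Y ℓ' ω| ≤ ∑ ℓ' ∈ Finset.range KT, |Y ℓ' ω| :=
    fun k hk => Finset.sum_le_sum_of_subset_of_nonneg (Finset.range_subset_range.2 hk)
      (fun i _ _ => abs_nonneg _)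
  have hkT : ∀ k : ℕ, k ≤ KT → (k:ℝ) * (N:ℝ)⁻¹ ≤ T := by
    intro k hk
    rw [hKT_def] at hk
    have h1 : (k:ℝ) ≤ (N:ℝ) * T := le_trans (Nat.cast_le.2 hk) (Nat.floor_le (by positivity))
    rw [← div_eq_mul_inv, div_le_iff₀ hNpos]
    linarith
  have hMle : ∀ k, k ≤ KT → M k ≤ E * (M 0 + b * Yb) := by
    intro k hk
    have h1 := hgron k
    have hρE : ρ ^ k ≤ E := by
      have h2 : ρ ≤ Real.exp (a * (N:ℝ)⁻¹) := by
        rw [hρ_def]; linarith [Real.add_one_le_exp (a * (N:ℝ)⁻¹)]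
      calc ρ ^ k ≤ Real.exp (a * (N:ℝ)⁻¹) ^ k := pow_le_pow_left₀ (by linarith) h2 k
        _ = Real.exp ((k:ℝ) * (a * (N:ℝ)⁻¹)) := (Real.exp_nat_mul _ k).symm
        _ ≤ E := by
            rw [hE_def]
            apply Real.exp_le_exp.2
            nlinarith [mul_nonneg ha0 (sub_nonneg.2 (hkT k hk))]
    have hmid0 : 0 ≤ M 0 + (N:ℝ)⁻¹ * (b * ∑ ℓ' ∈ Finset.range k, |Y ℓ' ω|) := by
      have := hM0 0
      have : (0:ℝ) ≤ (N:ℝ)⁻¹ * (b * ∑ ℓ' ∈ Finset.range k, |Y ℓ' ω|) :=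
        mul_nonneg hNinv0 (mul_nonneg hb0 (Finset.sum_nonneg fun i _ => abs_nonneg _))
      linarith [hM0 0]
    have h4 : M 0 + (N:ℝ)⁻¹ * (b * ∑ ℓ' ∈ Finset.range k, |Y ℓ' ω|) ≤ M 0 + b * Yb := by
      rw [hYb_def]
      nlinarith [hsumY k hk, mul_nonneg hNinv0 hb0]
    exact h1.trans (mul_le_mul hρE h4 hmid0 hE0)
  have hctel : ∀ k i, |c k i ω| ≤ |c 0 i ω|
      + ∑ ℓ' ∈ Finset.range k, (N:ℝ)⁻¹ * (b * |Y ℓ' ω| + a * M ℓ') := by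
    intro k i
    induction k with
    | zero => simp
    | succ k ih =>
      have := hcstep k i
      rw [Finset.sum_range_succ]
      linarith
  have hcbound : ∀ k, k ≤ KT → ∀ i, |c k i ω| ≤ |c 0 i ω| + D * (M 0 + Yb) := by
    intro k hk i
    have h1 := hctel k i
    have hEM0 : 0 ≤ E * (M 0 + b * Yb) :=
      mul_nonneg hE0 (add_nonneg (hM0 0) (mul_nonneg hb0 hYb0))
    have h2 : ∑ ℓ' ∈ Finset.range k, (N:ℝ)⁻¹ * (b * |Y ℓ' ω| + a * M ℓ')
        ≤ b * Yb + a * T * (E * (M 0 + b * Yb)) := by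
      calc ∑ ℓ' ∈ Finset.range k, (N:ℝ)⁻¹ * (b * |Y ℓ' ω| + a * M ℓ')
          ≤ ∑ ℓ' ∈ Finset.range k,
              ((N:ℝ)⁻¹ * (b * |Y ℓ' ω|) + (N:ℝ)⁻¹ * (a * (E * (M 0 + b * Yb)))) := by
            refine Finset.sum_le_sum fun ℓ' hl => ?_
            have hMl := hMle ℓ' (le_trans (le_of_lt (Finset.mem_range.1 hl)) hk)
            nlinarith [mul_nonneg hNinv0 ha0]
        _ = (N:ℝ)⁻¹ * b * (∑ ℓ' ∈ Finset.range k, |Y ℓ' ω|)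
              + (k:ℝ) * ((N:ℝ)⁻¹ * (a * (E * (M 0 + b * Yb)))) := by
            rw [Finset.sum_add_distrib, ← Finset.mul_sum, Finset.sum_const, Finset.card_range,
              nsmul_eq_mul, ← Finset.mul_sum]
            ring
        _ ≤ b * Yb + a * T * (E * (M 0 + b * Yb)) := by
            have h3 := hsumY k hk
            have h4 := hkT k hk
            have h3' : (N:ℝ)⁻¹ * b * (∑ ℓ' ∈ Finset.range k, |Y ℓ' ω|) ≤ b * Yb := by
              rw [hYb_def]
              nlinarith [mul_le_mul_of_nonneg_left h3 (mul_nonneg hNinv0 hb0)]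
            have h4' : (k:ℝ) * ((N:ℝ)⁻¹ * (a * (E * (M 0 + b * Yb))))
                ≤ a * T * (E * (M 0 + b * Yb)) := by
              nlinarith [mul_le_mul_of_nonneg_right h4 (mul_nonneg ha0 hEM0)]
            linarith
    have h5 : b * Yb + a * T * (E * (M 0 + b * Yb)) ≤ D * (M 0 + Yb) := by
      rw [hD_def]
      nlinarith [mul_nonneg hb0 (hM0 0), mul_nonneg (mul_nonneg (mul_nonneg ha0 hT0) hE0) hYb0,
        mul_nonneg (mul_nonneg (mul_nonneg (mul_nonneg ha0 hT0) hE0) hb0) (hM0 0)]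
    linarith
  have hQbound : ∀ k, k ≤ KT → Q k ≤ C₁ * (Q 0 + Yb ^ 2) := by
    intro k hk
    have h1 : ∀ i, (c k i ω) ^ 2 ≤ 2 * (c 0 i ω) ^ 2 + 2 * (D * (M 0 + Yb)) ^ 2 := by
      intro i
      have h := hcbound k hk i
      have habs : |c k i ω| ^ 2 ≤ (|c 0 i ω| + D * (M 0 + Yb)) ^ 2 :=
        pow_le_pow_left₀ (abs_nonneg _) h 2
      calc (c k i ω) ^ 2 = |c k i ω| ^ 2 := (sq_abs _).symm
        _ ≤ (|c 0 i ω| + D * (M 0 + Yb)) ^ 2 := habs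
        _ ≤ 2 * (c 0 i ω) ^ 2 + 2 * (D * (M 0 + Yb)) ^ 2 := by
            nlinarith [sq_nonneg (|c 0 i ω| - D * (M 0 + Yb)), sq_abs (c 0 i ω)]
    have h3 : ∑ i, (c k i ω) ^ 2
        ≤ 2 * (∑ i, (c 0 i ω) ^ 2) + (N:ℝ) * (2 * (D * (M 0 + Yb)) ^ 2) := by
      calc ∑ i, (c k i ω) ^ 2
          ≤ ∑ i : Fin N, (2 * (c 0 i ω) ^ 2 + 2 * (D * (M 0 + Yb)) ^ 2) :=
            Finset.sum_le_sum fun i _ => h1 i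
        _ = 2 * (∑ i, (c 0 i ω) ^ 2) + (N:ℝ) * (2 * (D * (M 0 + Yb)) ^ 2) := by
            rw [Finset.sum_add_distrib, ← Finset.mul_sum, Finset.sum_const, Finset.card_univ,
              Fintype.card_fin, nsmul_eq_mul]
    have h4 : Q k ≤ 2 * Q 0 + 2 * (D * (M 0 + Yb)) ^ 2 := by
      have h5 : Q k ≤ (N:ℝ)⁻¹ * (2 * (∑ i, (c 0 i ω) ^ 2) + (N:ℝ) * (2 * (D * (M 0 + Yb)) ^ 2)) := by
        simp only [hQ_def]
        exact mul_le_mul_of_nonneg_left h3 hNinv0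
      have e : (N:ℝ)⁻¹ * (2 * (∑ i, (c 0 i ω) ^ 2) + (N:ℝ) * (2 * (D * (M 0 + Yb)) ^ 2))
          = 2 * ((N:ℝ)⁻¹ * ∑ i, (c 0 i ω) ^ 2)
            + ((N:ℝ)⁻¹ * (N:ℝ)) * (2 * (D * (M 0 + Yb)) ^ 2) := by ring
      rw [e, hNN, one_mul] at h5
      simpa only [hQ_def] using h5
    have h6 := hMQ 0
    rw [hC1_def]
    nlinarith [sq_nonneg (M 0 - Yb), sq_nonneg D, hQ0 0, hYb0, hM0 0, sq_nonneg Yb,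
      mul_nonneg (sq_nonneg D) (sq_nonneg (M 0 - Yb)), sq_nonneg (M 0 + Yb)]
  -- final step
  intro ℓ hℓ
  set V := ∑ m, (X ℓ ω m) ^ 2 with hV_def
  have hV0 : 0 ≤ V := by rw [hV_def]; positivity
  set Yd := Y ℓ ω - net σ (X ℓ ω) (fun j => c ℓ j ω) (fun j => w ℓ j ω) with hYd_def
  clear_value V Yd
  have hstep1 : (N : ℝ)⁻¹ * ∑ i, ∑ m,
      (α * Yd * c ℓ i ω * deriv σ (∑ m', X ℓ ω m' * w ℓ i ω m') *
        (if ξ i m then X ℓ ω m else 0)) ^ 2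
      ≤ (N:ℝ)⁻¹ * ∑ i, (α ^ 2 * Yd ^ 2 * K' ^ 2 * V) * (c ℓ i ω) ^ 2 := by
    have hper : ∀ i : Fin N, ∑ m,
        (α * Yd * c ℓ i ω * deriv σ (∑ m', X ℓ ω m' * w ℓ i ω m') *
          (if ξ i m then X ℓ ω m else 0)) ^ 2
        ≤ (α ^ 2 * Yd ^ 2 * K' ^ 2 * V) * (c ℓ i ω) ^ 2 := by
      intro i
      set dσ := deriv σ (∑ m', X ℓ ω m' * w ℓ i ω m') with hdσ_def
      clear_value dσ
      have hinner : ∀ m, (α * Yd * c ℓ i ω * dσ * (if ξ i m then X ℓ ω m else 0)) ^ 2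
          ≤ (α * Yd * c ℓ i ω * dσ) ^ 2 * (X ℓ ω m) ^ 2 := by
        intro m
        by_cases h : ξ i m = true
        · rw [if_pos h, mul_pow]
        · have hpos : (0:ℝ) ≤ (α * Yd * c ℓ i ω * dσ) ^ 2 * (X ℓ ω m) ^ 2 := by positivity
          rw [if_neg h, mul_zero, zero_pow (two_ne_zero)]
          exact hpos
      have hd2 : dσ ^ 2 ≤ K' ^ 2 := by
        have h := pow_le_pow_left₀ (abs_nonneg _) (hdσ_def ▸ hKσ' (∑ m', X ℓ ω m' * w ℓ i ω m')) 2
        rwa [sq_abs] at h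
      calc ∑ m, (α * Yd * c ℓ i ω * dσ * (if ξ i m then X ℓ ω m else 0)) ^ 2
          ≤ ∑ m, (α * Yd * c ℓ i ω * dσ) ^ 2 * (X ℓ ω m) ^ 2 :=
            Finset.sum_le_sum fun m _ => hinner m
        _ = (α * Yd * c ℓ i ω * dσ) ^ 2 * V := by
            rw [hV_def, ← Finset.mul_sum]
        _ = (α ^ 2 * Yd ^ 2 * (c ℓ i ω) ^ 2 * V) * dσ ^ 2 := by ring
        _ ≤ (α ^ 2 * Yd ^ 2 * (c ℓ i ω) ^ 2 * V) * K' ^ 2 := by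
            exact mul_le_mul_of_nonneg_left hd2
              (mul_nonneg (mul_nonneg (mul_nonneg (sq_nonneg α) (sq_nonneg Yd))
                (sq_nonneg (c ℓ i ω))) hV0)
        _ = (α ^ 2 * Yd ^ 2 * K' ^ 2 * V) * (c ℓ i ω) ^ 2 := by ring
    exact mul_le_mul_of_nonneg_left (Finset.sum_le_sum fun i _ => hper i) hNinv0
  have hstep2 : (N:ℝ)⁻¹ * ∑ i, (α ^ 2 * Yd ^ 2 * K' ^ 2 * V) * (c ℓ i ω) ^ 2
      = (α ^ 2 * Yd ^ 2 * K' ^ 2 * V) * Q ℓ := by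
    simp only [hQ_def]; rw [← Finset.mul_sum]; ring
  have hy : |Yd| ≤ |Y ℓ ω| + K * M ℓ := by
    rw [hYd_def]
    exact (abs_sub _ _).trans (add_le_add le_rfl (hnet ℓ))
  have hYd2 : Yd ^ 2 ≤ 2 * (Y ℓ ω) ^ 2 + 2 * K ^ 2 * Q ℓ := by
    have h1 : Yd ^ 2 ≤ (|Y ℓ ω| + K * M ℓ) ^ 2 := by
      rw [← sq_abs Yd]; exact pow_le_pow_left₀ (abs_nonneg _) hy 2
    have h2 : (|Y ℓ ω| + K * M ℓ) ^ 2 ≤ 2 * (Y ℓ ω) ^ 2 + 2 * (K * M ℓ) ^ 2 := by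
      linarith [sq_nonneg (|Y ℓ ω| - K * M ℓ), sq_abs (Y ℓ ω)]
    have h4 := mul_le_mul_of_nonneg_left (hMQ ℓ) (sq_nonneg K)
    linarith [h1, h2, h4]
  have hQl := hQbound ℓ hℓ
  have hQl0 := hQ0 ℓ
  set q := Q 0 with hq_def
  set r := Yb ^ 2 with hr_def
  clear_value q r
  have hq0 : 0 ≤ q := by rw [hq_def]; exact hQ0 0
  have hr0 : 0 ≤ r := by rw [hr_def]; positivity
  have hP0 : 0 ≤ C₁ * (q + r) := mul_nonneg hC10.le (by linarith)
  have hfin1 : (α ^ 2 * Yd ^ 2 * K' ^ 2 * V) * Q ℓ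
      ≤ C₂ * V * ((2 * (Y ℓ ω) ^ 2 + 2 * K ^ 2 * Q ℓ) * Q ℓ) := by
    rw [hC2_def]
    have h1 := mul_le_mul_of_nonneg_left hYd2
      (mul_nonneg (mul_nonneg (sq_nonneg α) (sq_nonneg K')) (mul_nonneg hV0 hQl0))
    linarith [h1]
  have hfin2 : C₂ * V * ((2 * (Y ℓ ω) ^ 2 + 2 * K ^ 2 * Q ℓ) * Q ℓ)
      ≤ C₂ * V * ((2 * (Y ℓ ω) ^ 2 + 2 * K ^ 2 * (C₁ * (q + r))) * (C₁ * (q + r))) := by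
    have hPQ : 0 ≤ C₁ * (q + r) - Q ℓ := by linarith
    have h1 := mul_nonneg (mul_nonneg (mul_nonneg hC20 hV0) (sq_nonneg (Y ℓ ω))) hPQ
    have h2 := mul_nonneg (mul_nonneg (mul_nonneg (mul_nonneg hC20 hV0) (sq_nonneg K)) hPQ)
        (by linarith : (0:ℝ) ≤ C₁ * (q + r) + Q ℓ)
    linarith [h1, h2]
  set u := Y ℓ ω with hu_def
  clear_value u
  have hR0 : 0 ≤ u ^ 6 + V ^ 3 + q ^ 3 + r ^ 3 := by positivity
  have hA : V * u ^ 2 * (q + r) ≤ 2 * (u ^ 6 + V ^ 3 + q ^ 3 + r ^ 3) := by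
    have h1 := amgm3 hV0 (sq_nonneg u) hq0
    have h2 := amgm3 hV0 (sq_nonneg u) hr0
    linarith [h1, h2, pow_nonneg hq0 3, pow_nonneg hr0 3]
  have hB : V * (q + r) ^ 2 ≤ 4 * (u ^ 6 + V ^ 3 + q ^ 3 + r ^ 3) := by
    have h1 := amgm3 hV0 hq0 hq0
    have h2 := amgm3 hV0 hq0 hr0
    have h3 := amgm3 hV0 hr0 hr0
    linarith [h1, h2, h3, pow_nonneg hq0 3, pow_nonneg hr0 3, pow_nonneg hV0 3,
      sq_nonneg (u ^ 3)]
  have hfin3 : C₂ * V * ((2 * u ^ 2 + 2 * K ^ 2 * (C₁ * (q + r))) * (C₁ * (q + r)))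
      ≤ (4 * C₂ * C₁ + 8 * C₂ * K ^ 2 * C₁ ^ 2 + 1) * (u ^ 6 + V ^ 3 + q ^ 3 + r ^ 3) := by
    have t1 := mul_le_mul_of_nonneg_left hA
      (by positivity : (0:ℝ) ≤ 2 * C₂ * C₁)
    have t2 := mul_le_mul_of_nonneg_left hB
      (by positivity : (0:ℝ) ≤ 2 * C₂ * K ^ 2 * C₁ ^ 2)
    linarith [t1, t2, hR0]
  have final := (hstep1.trans_eq hstep2).trans (hfin1.trans (hfin2.trans hfin3))
  have e1 : q ^ 3 = ((N : ℝ)⁻¹ * ∑ j, (c 0 j ω) ^ 2) ^ 3 := by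
    rw [hq_def]; simp only [hQ_def]
  have e2 : r ^ 3 = Yb ^ 6 := by rw [hr_def]; ring
  rw [← e1, ← e2]
  exact final


end
end
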